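/- arXiv:1706.06231 — 8 statements merged into one kernel-verified Lean document; each statement's English description precedes it below -/
import Mathlib

section
/- The permutations 132 and 312 are des-Wilf equivalent: for all n, ∑_{σ ∈ Av_n(132)} q^{des(σ)} = ∑_{σ ∈ Av_n(312)} q^{des(σ)}. -/
open Polynomial

def des {n : ℕ} (σ : Equiv.Perm (Fin n)) : ℕ :=
  (Finset.univ.filter (fun i : Fin n =>
    ∃ h : (i : ℕ) + 1 < n, σ ⟨(i : ℕ) + 1, h⟩ < σ i)).card

def avoids312 {n : ℕ} (σ : Equiv.Perm (Fin n)) : Prop :=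
  ¬ ∃ i j k : Fin n, i < j ∧ j < k ∧ σ j < σ k ∧ σ k < σ i

def avoids132 {n : ℕ} (σ : Equiv.Perm (Fin n)) : Prop :=
  ¬ ∃ i j k : Fin n, i < j ∧ j < k ∧ σ i < σ k ∧ σ k < σ j

instance {n : ℕ} : DecidablePred (avoids312 (n := n)) := fun σ => by
  unfold avoids312; infer_instance

instance {n : ℕ} : DecidablePred (avoids132 (n := n)) := fun σ => by
  unfold avoids132; infer_instance

/-- adjacent-descent indicator, as a total function on ℕ. -/
def dsc {m : ℕ} (σ : Equiv.Perm (Fin (m+1))) (j : ℕ) : ℕ :=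
  if h : j + 1 < m + 1 then
    (if σ ⟨j+1, h⟩ < σ ⟨j, by omega⟩ then 1 else 0) else 0

lemma des_eq_sum {m : ℕ} (σ : Equiv.Perm (Fin (m+1))) :
    des σ = ∑ j ∈ Finset.range m, dsc σ j := by
  have h1 : des σ = ∑ i : Fin (m+1), dsc σ (i : ℕ) := by
    rw [des, Finset.card_filter]
    refine Finset.sum_congr rfl (fun i _ => ?_)
    by_cases h : (i : ℕ) + 1 < m + 1
    · simp only [dsc, dif_pos h]
      by_cases h2 : σ ⟨(i:ℕ)+1, h⟩ < σ ⟨(i:ℕ), by omega⟩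
      · rw [if_pos h2, if_pos ⟨h, by simpa using h2⟩]
      · rw [if_neg h2, if_neg]
        rintro ⟨h', hlt⟩
        exact h2 (by simpa using hlt)
    · simp only [dsc, dif_neg h]
      rw [if_neg]; rintro ⟨h', _⟩; exact h h'
  rw [h1, Fin.sum_univ_eq_sum_range (fun j => dsc σ j), Finset.sum_range_succ]
  simp [dsc]

lemma dsc_le_one {m : ℕ} (σ : Equiv.Perm (Fin (m+1))) (j : ℕ) : dsc σ j ≤ 1 := by
  unfold dsc; split <;> [skip; omega]; split <;> omega

lemma des_le {m : ℕ} (σ : Equiv.Perm (Fin (m+1))) : des σ ≤ m := by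
  rw [des_eq_sum]
  calc ∑ j ∈ Finset.range m, dsc σ j ≤ ∑ j ∈ Finset.range m, 1 :=
        Finset.sum_le_sum (fun j _ => dsc_le_one σ j)
    _ = m := by simp

lemma des_zero (σ : Equiv.Perm (Fin 0)) : des σ = 0 := by
  simp [des]

lemma des_zero' (σ : Equiv.Perm (Fin 1)) : des σ = 0 := by
  have := des_le σ; omega

lemma avoids_compl {n : ℕ} (σ : Equiv.Perm (Fin n)) :
    avoids312 (σ.trans Fin.revPerm) ↔ avoids132 σ := by
  unfold avoids312 avoids132
  constructor <;> intro h ⟨i, j, k, h1, h2, h3, h4⟩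
  · exact h ⟨i, j, k, h1, h2, by
      simp only [Equiv.trans_apply, Fin.revPerm_apply, Fin.rev_lt_rev]
      exact ⟨h4, h3⟩⟩
  · refine h ⟨i, j, k, h1, h2, ?_, ?_⟩ <;>
      simp only [Equiv.trans_apply, Fin.revPerm_apply, Fin.rev_lt_rev] at * <;> tauto

lemma des_compl {m : ℕ} (σ : Equiv.Perm (Fin (m+1))) :
    des (σ.trans Fin.revPerm) = m - des σ := by
  have key : ∀ j ∈ Finset.range m, dsc (σ.trans Fin.revPerm) j + dsc σ j = 1 := by
    intro j hj
    rw [Finset.mem_range] at hj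
    have h : j + 1 < m + 1 := by omega
    have hne : σ ⟨j+1, h⟩ ≠ σ ⟨j, by omega⟩ := by
      intro he
      have := σ.injective he
      simp [Fin.ext_iff] at this
    simp only [dsc, dif_pos h, Equiv.trans_apply, Fin.revPerm_apply, Fin.rev_lt_rev]
    rcases lt_or_gt_of_ne hne with hlt | hlt
    · rw [if_pos hlt, if_neg (by exact not_lt.2 hlt.le)]
    · rw [if_pos hlt, if_neg (by exact not_lt.2 hlt.le)]
  have h1 : des (σ.trans Fin.revPerm) + des σ = m := by
    rw [des_eq_sum, des_eq_sum, ← Finset.sum_add_distrib]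
    rw [Finset.sum_congr rfl key]; simp
  have := des_eq_sum σ
  omega

lemma sum_compl {m : ℕ} (F : ℕ → Polynomial ℤ) :
    ∑ σ ∈ Finset.univ.filter (fun σ : Equiv.Perm (Fin (m+1)) => avoids312 σ),
        F (des σ) =
    ∑ σ ∈ Finset.univ.filter (fun σ : Equiv.Perm (Fin (m+1)) => avoids132 σ),
        F (m - des σ) := by
  classical
  refine Finset.sum_nbij' (fun σ => σ.trans Fin.revPerm) (fun σ => σ.trans Fin.revPerm)
    ?_ ?_ ?_ ?_ ?_
  · intro σ hσ
    simp only [Finset.mem_filter, Finset.mem_univ, true_and] at *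
    exact (avoids_compl _).mp (by
      convert hσ using 2
      ext i; simp)
  · intro σ hσ
    simp only [Finset.mem_filter, Finset.mem_univ, true_and] at *
    exact (avoids_compl σ).mpr hσ
  · intro σ _; ext i; simp
  · intro σ _; ext i; simp
  · intro σ hσ
    simp only [Finset.mem_filter, Finset.mem_univ, true_and] at hσ
    rw [des_compl]
    congr 1
    have := des_le σ
    omega

section Asm
variable (p b m : ℕ) (hm : p + b = m) (α : Equiv.Perm (Fin p)) (β : Equiv.Perm (Fin b))

def asmF : Fin (m+1) → Fin (m+1) := fun i =>
  if h : (i : ℕ) < p then ⟨b + (α ⟨i, h⟩ : ℕ), by have := (α ⟨i, h⟩).isLt; omega⟩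
  else if _h' : (i : ℕ) = p then ⟨m, by omega⟩
  else
    have hb : (i:ℕ) - p - 1 < b := by have := i.isLt; omega
    ⟨(β ⟨(i:ℕ) - p - 1, hb⟩ : ℕ), by have := (β ⟨(i:ℕ) - p - 1, hb⟩).isLt; omega⟩

lemma asmF_lt {i : Fin (m+1)} (h : (i : ℕ) < p) :
    (asmF p b m hm α β i : ℕ) = b + (α ⟨i, h⟩ : ℕ) := by
  simp [asmF, dif_pos h]

lemma asmF_eq {i : Fin (m+1)} (h : (i : ℕ) = p) :
    (asmF p b m hm α β i : ℕ) = m := by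
  simp [asmF, h]

lemma asmF_gt {i : Fin (m+1)} (h : p < (i : ℕ)) :
    (asmF p b m hm α β i : ℕ)
      = (β ⟨(i:ℕ) - p - 1, by have := i.isLt; omega⟩ : ℕ) := by
  have h1 : ¬ ((i:ℕ) < p) := by omega
  have h2 : ¬ ((i:ℕ) = p) := by omega
  simp [asmF, dif_neg h1, dif_neg h2]

lemma asmF_lt_bounds {i : Fin (m+1)} (h : (i : ℕ) < p) :
    b ≤ (asmF p b m hm α β i : ℕ) ∧ (asmF p b m hm α β i : ℕ) < m := by
  rw [asmF_lt p b m hm α β h]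
  have := (α ⟨i, h⟩).isLt; omega

lemma asmF_gt_bound {i : Fin (m+1)} (h : p < (i : ℕ)) :
    (asmF p b m hm α β i : ℕ) < b := by
  rw [asmF_gt p b m hm α β h]
  exact (β _).isLt

lemma asmF_inj : Function.Injective (asmF p b m hm α β) := by
  intro i j hij
  have hv : (asmF p b m hm α β i : ℕ) = (asmF p b m hm α β j : ℕ) := by rw [hij]
  have hi := i.isLt; have hj := j.isLt
  rcases lt_trichotomy (i:ℕ) p with h1|h1|h1 <;> rcases lt_trichotomy (j:ℕ) p with h2|h2|h2
  · rw [asmF_lt p b m hm α β h1, asmF_lt p b m hm α β h2] at hv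
    have : α ⟨i, h1⟩ = α ⟨j, h2⟩ := Fin.ext (by omega)
    have := α.injective this
    exact Fin.ext (by simpa [Fin.ext_iff] using this)
  · have b1 := asmF_lt_bounds p b m hm α β h1
    rw [asmF_eq p b m hm α β h2] at hv; omega
  · have b1 := asmF_lt_bounds p b m hm α β h1
    have b2 := asmF_gt_bound p b m hm α β h2; omega
  · have b2 := asmF_lt_bounds p b m hm α β h2
    rw [asmF_eq p b m hm α β h1] at hv; omega
  · exact Fin.ext (by omega)
  · have b2 := asmF_gt_bound p b m hm α β h2
    rw [asmF_eq p b m hm α β h1] at hv; omega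
  · have b1 := asmF_gt_bound p b m hm α β h1
    have b2 := asmF_lt_bounds p b m hm α β h2; omega
  · have b1 := asmF_gt_bound p b m hm α β h1
    rw [asmF_eq p b m hm α β h2] at hv; omega
  · rw [asmF_gt p b m hm α β h1, asmF_gt p b m hm α β h2] at hv
    have : β ⟨(i:ℕ)-p-1, by omega⟩ = β ⟨(j:ℕ)-p-1, by omega⟩ := Fin.ext (by omega)
    have := β.injective this
    exact Fin.ext (by simp [Fin.ext_iff] at this; omega)

noncomputable def asm : Equiv.Perm (Fin (m+1)) :=
  Equiv.ofBijective _ (Finite.injective_iff_bijective.mp (asmF_inj p b m hm α β))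

lemma asm_apply (i : Fin (m+1)) : asm p b m hm α β i = asmF p b m hm α β i := rfl

lemma asm_avoids (hα : avoids132 α) (hβ : avoids132 β) :
    avoids132 (asm p b m hm α β) := by
  rintro ⟨i, j, k, hij, hjk, h3, h4⟩
  rw [Fin.lt_iff_val_lt_val] at hij hjk
  have h3' : (asmF p b m hm α β i : ℕ) < (asmF p b m hm α β k : ℕ) := h3
  have h4' : (asmF p b m hm α β k : ℕ) < (asmF p b m hm α β j : ℕ) := h4
  have hk := k.isLt
  rcases lt_trichotomy (i:ℕ) p with h1|h1|h1
  · rcases lt_trichotomy (k:ℕ) p with h2|h2|h2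
    · have hjp : (j:ℕ) < p := by omega
      rw [asmF_lt p b m hm α β h1, asmF_lt p b m hm α β h2] at h3'
      rw [asmF_lt p b m hm α β h2, asmF_lt p b m hm α β hjp] at h4'
      exact hα ⟨⟨i, h1⟩, ⟨j, hjp⟩, ⟨k, h2⟩, Fin.mk_lt_mk.mpr hij, Fin.mk_lt_mk.mpr hjk,
        by rw [Fin.lt_iff_val_lt_val]; omega, by rw [Fin.lt_iff_val_lt_val]; omega⟩
    · have hjv : (asmF p b m hm α β j : ℕ) ≤ m := by have := (asmF p b m hm α β j).isLt; omega
      rw [asmF_eq p b m hm α β h2] at h4'; omega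
    · have b1 := asmF_lt_bounds p b m hm α β h1
      have b2 := asmF_gt_bound p b m hm α β h2; omega
  · rw [asmF_eq p b m hm α β h1] at h3'
    have := (asmF p b m hm α β k).isLt; omega
  · have hjp : p < (j:ℕ) := by omega
    have hkp : p < (k:ℕ) := by omega
    rw [asmF_gt p b m hm α β h1, asmF_gt p b m hm α β hkp] at h3'
    rw [asmF_gt p b m hm α β hkp, asmF_gt p b m hm α β hjp] at h4'
    exact hβ ⟨⟨(i:ℕ)-p-1, by omega⟩, ⟨(j:ℕ)-p-1, by omega⟩, ⟨(k:ℕ)-p-1, by omega⟩,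
      Fin.mk_lt_mk.mpr (by omega), Fin.mk_lt_mk.mpr (by omega),
      by rw [Fin.lt_iff_val_lt_val]; exact h3', by rw [Fin.lt_iff_val_lt_val]; exact h4'⟩

lemma asm_top : asm p b m hm α β ⟨p, by omega⟩ = ⟨m, by omega⟩ := by
  apply Fin.ext
  exact asmF_eq p b m hm α β rfl

end Asm

set_option maxHeartbeats 1000000 in
lemma des_asm (p b m : ℕ) (hm : p + b = m) (α : Equiv.Perm (Fin p)) (β : Equiv.Perm (Fin b)) :
    des (asm p b m hm α β) = des α + des β + (if b = 0 then 0 else 1) := by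
  subst hm
  have main : ∀ (σ : Equiv.Perm (Fin (p+b+1))),
      (∀ i : Fin (p+b+1), (σ i : ℕ) = (asmF p b (p+b) rfl α β i : ℕ)) →
      des σ = des α + des β + (if b = 0 then 0 else 1) := by
    intro σ happ
    rw [des_eq_sum, Finset.sum_range_add (fun j => dsc σ j) p b]
    have hpre : ∑ j ∈ Finset.range p, dsc σ j = des α := by
      cases p with
      | zero => simp [des_zero]
      | succ p' =>
        rw [des_eq_sum α, Finset.sum_range_succ]
        have hlast : dsc σ p' = 0 := by
          have h1 : p' + 1 < p' + 1 + b + 1 := by omega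
          have hp'lt : p' < p' + 1 := by omega
          have e1 : (σ ⟨p'+1, h1⟩ : ℕ) = p' + 1 + b := by
            rw [happ]; exact asmF_eq _ b _ rfl α β rfl
          have e2 : (σ ⟨p', by omega⟩ : ℕ) = b + (α ⟨p', hp'lt⟩ : ℕ) := by
            rw [happ]; exact asmF_lt _ b _ rfl α β hp'lt
          rw [dsc, dif_pos h1, if_neg]
          simp only [Fin.lt_iff_val_lt_val, e1, e2]
          have := (α ⟨p', hp'lt⟩).isLt; omega
        rw [hlast, add_zero]
        refine Finset.sum_congr rfl (fun j hj => ?_)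
        rw [Finset.mem_range] at hj
        have h1 : j + 1 < p' + 1 + b + 1 := by omega
        have h2 : j + 1 < p' + 1 := by omega
        have h3 : j < p' + 1 := by omega
        have e1 : (σ ⟨j+1, h1⟩ : ℕ) = b + (α ⟨j+1, h2⟩ : ℕ) := by
          rw [happ]; exact asmF_lt _ b _ rfl α β h2
        have e2 : (σ ⟨j, by omega⟩ : ℕ) = b + (α ⟨j, h3⟩ : ℕ) := by
          rw [happ]; exact asmF_lt _ b _ rfl α β h3
        rw [dsc, dsc, dif_pos h1, dif_pos h2]
        simp only [Fin.lt_iff_val_lt_val, e1, e2, Nat.add_lt_add_iff_left]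
    rw [hpre]
    have hsuf : ∑ j ∈ Finset.range b, dsc σ (p + j) = des β + (if b = 0 then 0 else 1) := by
      cases b with
      | zero => simp [des_zero]
      | succ b' =>
        rw [des_eq_sum β, Finset.sum_range_succ' (fun j => dsc σ (p + j)) b']
        have hfirst : dsc σ (p + 0) = 1 := by
          have h1 : p + 0 + 1 < p + (b'+1) + 1 := by omega
          have w : (σ ⟨p+0+1, h1⟩ : ℕ) < b' + 1 := by
            rw [happ]; exact asmF_gt_bound p _ _ rfl α β (i := ⟨p+0+1, h1⟩) (by show p < p+0+1; omega)
          have e2 : (σ ⟨p+0, by omega⟩ : ℕ) = p + (b'+1) := by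
            rw [happ]; exact asmF_eq p _ _ rfl α β rfl
          rw [dsc, dif_pos h1, if_pos]
          simp only [Fin.lt_iff_val_lt_val, e2]
          omega
        rw [hfirst]
        have hrest : ∀ j ∈ Finset.range b', dsc σ (p + (j + 1)) = dsc β j := by
          intro j hj
          rw [Finset.mem_range] at hj
          have h1 : p + (j + 1) + 1 < p + (b'+1) + 1 := by omega
          have h2 : j + 1 < b' + 1 := by omega
          have h3 : j < b' + 1 := by omega
          have e1 : (σ ⟨p+(j+1)+1, h1⟩ : ℕ) = (β ⟨j+1, h2⟩ : ℕ) := by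
            rw [happ, asmF_gt p _ _ rfl α β (i := ⟨p+(j+1)+1, h1⟩) (by show p < p+(j+1)+1; omega)]
            exact congrArg (fun x : Fin (b'+1) => ((β x) : ℕ))
              (Fin.ext (by show p+(j+1)+1-p-1 = j+1; omega))
          have e2 : (σ ⟨p+(j+1), by omega⟩ : ℕ) = (β ⟨j, h3⟩ : ℕ) := by
            rw [happ, asmF_gt p _ _ rfl α β (i := ⟨p+(j+1), by omega⟩) (by show p < p+(j+1); omega)]
            exact congrArg (fun x : Fin (b'+1) => ((β x) : ℕ))
              (Fin.ext (by show p+(j+1)-p-1 = j; omega))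
          rw [dsc, dsc, dif_pos h1, dif_pos h2]
          simp only [Fin.lt_iff_val_lt_val, e1, e2]
        rw [Finset.sum_congr rfl hrest]
        simp [add_comm]
    rw [hsuf]
    omega
  exact main _ (fun i => rfl)

lemma asm_inj_pair (p b m : ℕ) (hm : p + b = m) (α α' : Equiv.Perm (Fin p))
    (β β' : Equiv.Perm (Fin b)) (h : asm p b m hm α β = asm p b m hm α' β') :
    α = α' ∧ β = β' := by
  subst hm
  constructor
  · apply Equiv.ext; intro j
    have pfm : (j : ℕ) < p + b + 1 := by have := j.isLt; omega
    have e1 : (asm p b _ rfl α β ⟨j, pfm⟩ : ℕ) = b + (α j : ℕ) :=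
      asmF_lt p b _ rfl α β j.isLt
    have e2 : (asm p b _ rfl α' β' ⟨j, pfm⟩ : ℕ) = b + (α' j : ℕ) :=
      asmF_lt p b _ rfl α' β' j.isLt
    rw [h] at e1
    apply Fin.ext; omega
  · apply Equiv.ext; intro j
    have pfm : p + 1 + (j : ℕ) < p + b + 1 := by have := j.isLt; omega
    have e1 : (asm p b _ rfl α β ⟨p+1+(j:ℕ), pfm⟩ : ℕ) = (β j : ℕ) := by
      show (asmF p b _ rfl α β ⟨p+1+(j:ℕ), pfm⟩ : ℕ) = (β j : ℕ)
      rw [asmF_gt p b _ rfl α β (i := ⟨p+1+(j:ℕ), pfm⟩) (by show p < p+1+(j:ℕ); omega)]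
      exact congrArg (fun x : Fin b => ((β x) : ℕ))
        (Fin.ext (by show p+1+(j:ℕ)-p-1 = (j:ℕ); omega))
    have e2 : (asm p b _ rfl α' β' ⟨p+1+(j:ℕ), pfm⟩ : ℕ) = (β' j : ℕ) := by
      show (asmF p b _ rfl α' β' ⟨p+1+(j:ℕ), pfm⟩ : ℕ) = (β' j : ℕ)
      rw [asmF_gt p b _ rfl α' β' (i := ⟨p+1+(j:ℕ), pfm⟩) (by show p < p+1+(j:ℕ); omega)]
      exact congrArg (fun x : Fin b => ((β' x) : ℕ))
        (Fin.ext (by show p+1+(j:ℕ)-p-1 = (j:ℕ); omega))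
    rw [h] at e1
    apply Fin.ext; omega

def emb (p b : ℕ) : Fin p → Fin (p+b+1) := fun x => ⟨(x:ℕ), by have := x.isLt; omega⟩
def embS (p b : ℕ) : Fin b → Fin (p+b+1) := fun x => ⟨p+1+(x:ℕ), by have := x.isLt; omega⟩
lemma emb_val (p b : ℕ) (x : Fin p) : (emb p b x : ℕ) = (x:ℕ) := rfl
lemma embS_val (p b : ℕ) (x : Fin b) : (embS p b x : ℕ) = p+1+(x:ℕ) := rfl

set_option maxHeartbeats 1000000 in
lemma asm_surj (p b m : ℕ) (hm : p + b = m) (σ : Equiv.Perm (Fin (m+1)))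
    (hav : avoids132 σ) (htop : σ ⟨p, by omega⟩ = ⟨m, by omega⟩) :
    ∃ (α : Equiv.Perm (Fin p)) (β : Equiv.Perm (Fin b)),
      avoids132 α ∧ avoids132 β ∧ asm p b m hm α β = σ := by
  subst hm
  -- not-top values
  have nottop : ∀ j : Fin (p+b+1), (j:ℕ) ≠ p → (σ j : ℕ) < p + b := by
    intro j hj
    have h1 : (σ j : ℕ) ≠ p + b := by
      intro hh
      have h2 : σ j = σ ⟨p, by omega⟩ := by
        rw [htop]; exact Fin.ext hh
      have h3 := σ.injective h2
      rw [h3] at hj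
      exact hj rfl
    have := (σ j).isLt; omega
  -- cross inequality
  have cross : ∀ i j : Fin (p+b+1), (i:ℕ) < p → p < (j:ℕ) → (σ j : ℕ) < (σ i : ℕ) := by
    intro i j hi hj
    have hne : (σ i : ℕ) ≠ (σ j : ℕ) := by
      intro h
      have h2 := σ.injective (Fin.ext h)
      rw [h2] at hi; omega
    by_contra hcon
    push_neg at hcon
    refine hav ⟨i, ⟨p, by omega⟩, j, ?_, ?_, ?_, ?_⟩
    · rw [Fin.lt_iff_val_lt_val]; exact hi
    · rw [Fin.lt_iff_val_lt_val]; exact hj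
    · rw [Fin.lt_iff_val_lt_val]; omega
    · rw [htop, Fin.lt_iff_val_lt_val]
      exact nottop j (by omega)
  -- suffix values are small
  have sufb : ∀ j : Fin (p+b+1), p < (j:ℕ) → (σ j : ℕ) < b := by
    intro j hj
    have hsub : (Finset.univ.filter (fun i : Fin (p+b+1) => (i:ℕ) ≤ p)).image σ ⊆
        Finset.Ioi (σ j) := by
      intro v hv
      simp only [Finset.mem_image, Finset.mem_filter, Finset.mem_univ, true_and] at hv
      obtain ⟨i, hip, rfl⟩ := hv
      rw [Finset.mem_Ioi, Fin.lt_iff_val_lt_val]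
      rcases lt_or_eq_of_le hip with h | h
      · exact cross i j h hj
      · have h2 : σ i = σ ⟨p, by omega⟩ := by
          congr 1; exact Fin.ext h
        rw [h2, htop]
        exact nottop j (by omega)
    have c1 : (Finset.univ.filter (fun i : Fin (p+b+1) => (i:ℕ) ≤ p)).card = p + 1 := by
      have he : (Finset.univ.filter (fun i : Fin (p+b+1) => (i:ℕ) ≤ p)) =
          Finset.Iic (⟨p, by omega⟩ : Fin (p+b+1)) := by
        ext i
        simp [Finset.mem_Iic, Fin.le_def]
      rw [he, Fin.card_Iic]
    have c2 := Finset.card_le_card hsub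
    rw [Finset.card_image_of_injective _ σ.injective, c1, Fin.card_Ioi] at c2
    omega
  -- prefix values are big
  have preb : ∀ i : Fin (p+b+1), (i:ℕ) < p → b ≤ (σ i : ℕ) := by
    intro i hi
    have hsub : (Finset.univ.filter (fun j : Fin (p+b+1) => p < (j:ℕ))).image σ ⊆
        Finset.Iio (σ i) := by
      intro v hv
      simp only [Finset.mem_image, Finset.mem_filter, Finset.mem_univ, true_and] at hv
      obtain ⟨j, hjp, rfl⟩ := hv
      rw [Finset.mem_Iio, Fin.lt_iff_val_lt_val]
      exact cross i j hi hjp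
    have c1 : (Finset.univ.filter (fun j : Fin (p+b+1) => p < (j:ℕ))).card = b := by
      have he : (Finset.univ.filter (fun j : Fin (p+b+1) => p < (j:ℕ))) =
          Finset.Ioi (⟨p, by omega⟩ : Fin (p+b+1)) := by
        ext j
        simp [Finset.mem_Ioi, Fin.lt_iff_val_lt_val]
      rw [he, Fin.card_Ioi]
      show p + b + 1 - 1 - p = b
      omega
    have c2 := Finset.card_le_card hsub
    rw [Finset.card_image_of_injective _ σ.injective, c1, Fin.card_Iio] at c2
    exact c2
  -- construct α
  have hαinj : Function.Injective (fun x : Fin p =>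
      (⟨(σ (emb p b x) : ℕ) - b, by
        have h1 := preb (emb p b x) x.isLt
        have h2 := nottop (emb p b x) (by rw [emb_val]; omega)
        omega⟩ : Fin p)) := by
    intro x y hxy
    have hx := preb (emb p b x) x.isLt
    have hy := preb (emb p b y) y.isLt
    rw [Fin.mk.injEq] at hxy
    have h2 : σ (emb p b x) = σ (emb p b y) := Fin.ext (by omega)
    have h3 := σ.injective h2
    have h4 : (emb p b x : ℕ) = (emb p b y : ℕ) := by rw [h3]
    rw [emb_val, emb_val] at h4
    exact Fin.ext h4
  obtain ⟨α, hα⟩ : ∃ α : Equiv.Perm (Fin p), ∀ x : Fin p,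
      (α x : ℕ) = (σ (emb p b x) : ℕ) - b :=
    ⟨Equiv.ofBijective _ (Finite.injective_iff_bijective.mp hαinj), fun x => rfl⟩
  -- construct β
  have hβinj : Function.Injective (fun x : Fin b =>
      (⟨(σ (embS p b x) : ℕ), by
        exact sufb (embS p b x) (by rw [embS_val]; omega)⟩ : Fin b)) := by
    intro x y hxy
    rw [Fin.mk.injEq] at hxy
    have h2 : σ (embS p b x) = σ (embS p b y) := Fin.ext hxy
    have h3 := σ.injective h2
    have h4 : (embS p b x : ℕ) = (embS p b y : ℕ) := by rw [h3]
    rw [embS_val, embS_val] at h4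
    exact Fin.ext (by omega)
  obtain ⟨β, hβ⟩ : ∃ β : Equiv.Perm (Fin b), ∀ x : Fin b,
      (β x : ℕ) = (σ (embS p b x) : ℕ) :=
    ⟨Equiv.ofBijective _ (Finite.injective_iff_bijective.mp hβinj), fun x => rfl⟩
  -- α avoids 132
  have hαav : avoids132 α := by
    rintro ⟨x, y, z, h1, h2, h3, h4⟩
    rw [Fin.lt_iff_val_lt_val] at h1 h2 h3 h4
    rw [hα x, hα z] at h3
    rw [hα z, hα y] at h4
    have bx := preb (emb p b x) x.isLt
    have by' := preb (emb p b y) y.isLt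
    have bz := preb (emb p b z) z.isLt
    refine hav ⟨emb p b x, emb p b y, emb p b z, ?_, ?_, ?_, ?_⟩
    · rw [Fin.lt_iff_val_lt_val, emb_val, emb_val]; omega
    · rw [Fin.lt_iff_val_lt_val, emb_val, emb_val]; omega
    · rw [Fin.lt_iff_val_lt_val]; omega
    · rw [Fin.lt_iff_val_lt_val]; omega
  -- β avoids 132
  have hβav : avoids132 β := by
    rintro ⟨x, y, z, h1, h2, h3, h4⟩
    rw [Fin.lt_iff_val_lt_val] at h1 h2 h3 h4
    rw [hβ x, hβ z] at h3
    rw [hβ z, hβ y] at h4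
    refine hav ⟨embS p b x, embS p b y, embS p b z, ?_, ?_, ?_, ?_⟩
    · rw [Fin.lt_iff_val_lt_val, embS_val, embS_val]; omega
    · rw [Fin.lt_iff_val_lt_val, embS_val, embS_val]; omega
    · rw [Fin.lt_iff_val_lt_val]; omega
    · rw [Fin.lt_iff_val_lt_val]; omega
  refine ⟨α, β, hαav, hβav, ?_⟩
  apply Equiv.ext
  intro i
  apply Fin.ext
  have e0 : (asm p b _ rfl α β i : ℕ) = (asmF p b _ rfl α β i : ℕ) := rfl
  rcases lt_trichotomy (i:ℕ) p with h | h | h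
  · rw [e0, asmF_lt p b _ rfl α β h, hα ⟨(i:ℕ), h⟩]
    have he : emb p b ⟨(i:ℕ), h⟩ = i := Fin.ext rfl
    rw [he]
    have := preb i h
    omega
  · rw [e0, asmF_eq p b _ rfl α β h]
    have h2 : σ i = σ ⟨p, by omega⟩ := by congr 1; exact Fin.ext h
    rw [h2, htop]
  · rw [e0, asmF_gt p b _ rfl α β h, hβ ⟨(i:ℕ)-p-1, by have := i.isLt; omega⟩]
    have he : embS p b ⟨(i:ℕ)-p-1, by have := i.isLt; omega⟩ = i :=
      Fin.ext (by rw [embS_val]; show p+1+((i:ℕ)-p-1) = (i:ℕ); omega)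
    rw [he]

set_option maxHeartbeats 1000000 in
lemma split (m : ℕ) (F : ℕ → Polynomial ℤ) :
    (∑ σ ∈ Finset.univ.filter (fun σ : Equiv.Perm (Fin (m+1)) => avoids132 σ), F (des σ))
    = ∑ p ∈ Finset.range (m+1),
        ∑ x ∈ (Finset.univ.filter (fun α : Equiv.Perm (Fin p) => avoids132 α)) ×ˢ
              (Finset.univ.filter (fun β : Equiv.Perm (Fin (m-p)) => avoids132 β)),
          F (des x.1 + des x.2 + (if m - p = 0 then 0 else 1)) := by
  classical
  rw [← Finset.sum_fiberwise_of_maps_to (g := fun σ : Equiv.Perm (Fin (m+1)) =>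
      ((σ⁻¹ ⟨m, by omega⟩ : Fin (m+1)) : ℕ)) (t := Finset.range (m+1))
      (fun σ _ => Finset.mem_range.mpr (σ⁻¹ ⟨m, by omega⟩).isLt) (fun σ => F (des σ))]
  refine Finset.sum_congr rfl (fun p hp => ?_)
  have hpm : p ≤ m := by have := Finset.mem_range.mp hp; omega
  have hm : p + (m - p) = m := by omega
  refine (Finset.sum_bij (fun x _ => asm p (m-p) m hm x.1 x.2) ?_ ?_ ?_ ?_).symm
  · intro x hx
    rw [Finset.mem_product] at hx
    simp only [Finset.mem_filter, Finset.mem_univ, true_and] at hx ⊢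
    refine ⟨asm_avoids p (m-p) m hm x.1 x.2 hx.1 hx.2, ?_⟩
    have h1 : asm p (m-p) m hm x.1 x.2 ⟨p, by omega⟩ = ⟨m, by omega⟩ :=
      asm_top p (m-p) m hm x.1 x.2
    have h2 : (asm p (m-p) m hm x.1 x.2)⁻¹ (asm p (m-p) m hm x.1 x.2 ⟨p, by omega⟩)
        = ⟨p, by omega⟩ := Equiv.symm_apply_apply _ _
    rw [h1] at h2
    rw [h2]
  · intro a1 h1 a2 h2 he
    have h3 := asm_inj_pair p (m-p) m hm a1.1 a2.1 a1.2 a2.2 he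
    exact Prod.ext h3.1 h3.2
  · intro σ hσ
    simp only [Finset.mem_filter, Finset.mem_univ, true_and] at hσ
    have htop : σ ⟨p, by omega⟩ = ⟨m, by omega⟩ := by
      have h3 : σ⁻¹ ⟨m, by omega⟩ = ⟨p, by omega⟩ := Fin.ext hσ.2
      rw [← h3]; exact Equiv.apply_symm_apply _ _
    obtain ⟨α, β, hαav, hβav, heq⟩ := asm_surj p (m-p) m hm σ hσ.1 htop
    refine ⟨(α, β), ?_, heq⟩
    rw [Finset.mem_product]
    simp only [Finset.mem_filter, Finset.mem_univ, true_and]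
    exact ⟨hαav, hβav⟩
  · intro x hx
    rw [des_asm]


noncomputable def Ap (n : ℕ) : Polynomial ℤ :=
  ∑ σ ∈ Finset.univ.filter (fun σ : Equiv.Perm (Fin n) => avoids132 σ), (X : Polynomial ℤ) ^ des σ
noncomputable def Bp (n : ℕ) : Polynomial ℤ :=
  ∑ σ ∈ Finset.univ.filter (fun σ : Equiv.Perm (Fin n) => avoids312 σ), (X : Polynomial ℤ) ^ des σ

lemma filter132_zero :
    (Finset.univ.filter (fun σ : Equiv.Perm (Fin 0) => avoids132 σ)) = Finset.univ := by
  apply Finset.filter_true_of_mem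
  rintro σ _ ⟨i, _⟩
  exact i.elim0

lemma filter312_zero :
    (Finset.univ.filter (fun σ : Equiv.Perm (Fin 0) => avoids312 σ)) = Finset.univ := by
  apply Finset.filter_true_of_mem
  rintro σ _ ⟨i, _⟩
  exact i.elim0

lemma Ap_zero : Ap 0 = 1 := by
  rw [Ap, filter132_zero]
  rw [Finset.univ_unique, Finset.sum_singleton, des_zero, pow_zero]

lemma Bp_zero : Bp 0 = 1 := by
  rw [Bp, filter312_zero]
  rw [Finset.univ_unique, Finset.sum_singleton, des_zero, pow_zero]

lemma des_bound {n : ℕ} (σ : Equiv.Perm (Fin n)) :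
    des σ + (if n = 0 then 0 else 1) ≤ n := by
  cases n with
  | zero => simp [des_zero]
  | succ m => have := des_le σ; simp; omega

lemma prod_sum_split (a b : ℕ) (Fa Fb : ℕ → ℕ)
    (sa : Finset (Equiv.Perm (Fin a))) (sb : Finset (Equiv.Perm (Fin b)))
    (e : ℕ) :
    ∑ x ∈ sa ×ˢ sb, (X : Polynomial ℤ) ^ (Fa (des x.1) + Fb (des x.2) + e)
      = (∑ α ∈ sa, (X : Polynomial ℤ) ^ Fa (des α)) *
        (∑ β ∈ sb, (X : Polynomial ℤ) ^ Fb (des β)) * (X : Polynomial ℤ) ^ e := by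
  rw [Finset.sum_mul_sum, Finset.sum_product, Finset.sum_mul]
  refine Finset.sum_congr rfl (fun α _ => ?_)
  rw [Finset.sum_mul]
  refine Finset.sum_congr rfl (fun β _ => ?_)
  rw [pow_add, pow_add]

lemma Ap_rec (m : ℕ) :
    Ap (m+1) = ∑ p ∈ Finset.range (m+1),
      Ap p * Ap (m-p) * (X : Polynomial ℤ) ^ (if m - p = 0 then 0 else 1) := by
  rw [Ap, split m (fun d => (X : Polynomial ℤ) ^ d)]
  refine Finset.sum_congr rfl (fun p hp => ?_)
  rw [Ap, Ap]
  exact prod_sum_split p (m-p) (fun d => d) (fun d => d) _ _ _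

lemma Bsum (k : ℕ) :
    ∑ α ∈ Finset.univ.filter (fun σ : Equiv.Perm (Fin k) => avoids132 σ),
        (X : Polynomial ℤ) ^ (k - des α - (if k = 0 then 0 else 1)) = Bp k := by
  cases k with
  | zero =>
    rw [filter132_zero, Bp_zero]
    rw [Finset.univ_unique, Finset.sum_singleton]
    simp
  | succ k' =>
    rw [Bp, sum_compl (fun d => (X : Polynomial ℤ) ^ d)]
    refine Finset.sum_congr rfl (fun σ _ => ?_)
    congr 1
    simp
    omega

lemma Bp_rec (m : ℕ) :
    Bp (m+1) = ∑ p ∈ Finset.range (m+1),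
      Bp p * Bp (m-p) * (X : Polynomial ℤ) ^ (if p = 0 then 0 else 1) := by
  rw [Bp, sum_compl (fun d => (X : Polynomial ℤ) ^ d),
    split m (fun d => (X : Polynomial ℤ) ^ (m - d))]
  refine Finset.sum_congr rfl (fun p hp => ?_)
  rw [Finset.mem_range] at hp
  have key : ∀ x ∈ (Finset.univ.filter (fun α : Equiv.Perm (Fin p) => avoids132 α)) ×ˢ
      (Finset.univ.filter (fun β : Equiv.Perm (Fin (m-p)) => avoids132 β)),
      (X : Polynomial ℤ) ^ (m - (des x.1 + des x.2 + (if m - p = 0 then 0 else 1)))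
      = (X : Polynomial ℤ) ^ ((p - des x.1 - (if p = 0 then 0 else 1)) +
          ((m-p) - des x.2 - (if m - p = 0 then 0 else 1)) + (if p = 0 then 0 else 1)) := by
    intro x _
    congr 1
    have h1 := des_bound x.1
    have h2 := des_bound x.2
    rcases Nat.eq_zero_or_pos p with h | h <;> rcases Nat.eq_zero_or_pos (m - p) with h' | h' <;>
      split_ifs at h1 h2 ⊢ <;> omega
  rw [Finset.sum_congr rfl key]
  refine Eq.trans (prod_sum_split p (m-p)
    (fun d => p - d - (if p = 0 then 0 else 1))
    (fun d => (m-p) - d - (if m - p = 0 then 0 else 1)) _ _ (if p = 0 then 0 else 1)) ?_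
  rw [Bsum p, Bsum (m-p)]

theorem Ap_eq_Bp : ∀ n, Ap n = Bp n := by
  intro n
  induction n using Nat.strong_induction_on with
  | _ n ih =>
    cases n with
    | zero => rw [Ap_zero, Bp_zero]
    | succ m =>
      rw [Ap_rec, Bp_rec]
      have h1 : ∀ p ∈ Finset.range (m+1),
          Ap p * Ap (m-p) * (X : Polynomial ℤ) ^ (if m - p = 0 then 0 else 1)
          = Bp p * Bp (m-p) * (X : Polynomial ℤ) ^ (if m - p = 0 then 0 else 1) := by
        intro p hp
        rw [Finset.mem_range] at hp
        rw [ih p (by omega), ih (m-p) (by omega)]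
      rw [Finset.sum_congr rfl h1]
      rw [← Finset.sum_range_reflect]
      refine Finset.sum_congr rfl (fun p hp => ?_)
      rw [Finset.mem_range] at hp
      have e1 : m - (m - p) = p := by omega
      have e2 : m + 1 - 1 - p = m - p := by omega
      rw [e2, e1, mul_comm (Bp (m-p)) (Bp p)]

/-- `132` and `312` are des-Wilf equivalent. -/
theorem desWilf_132_312 :
    ∀ n : ℕ,
      ∑ σ ∈ Finset.univ.filter (fun σ : Equiv.Perm (Fin n) => avoids132 σ),
          (X : Polynomial ℤ) ^ des σ =
        ∑ σ ∈ Finset.univ.filter (fun σ : Equiv.Perm (Fin n) => avoids312 σ),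
          (X : Polynomial ℤ) ^ des σ := Ap_eq_Bp
end

section
/- A permutation σ = a_1...a_n avoids the mesh pattern (132, {(2,0)}) with exactly k descents if and only if σ is a concatenation of k+1 maximal increasing runs whose first letters, after the first run, are strictly decreasing and all runs after the first start with a letter larger than a_1's run minimum appropriately; in particular the map sending σ to the set partition of {1,...,n} whose blocks are the maximal increasing runs of σ is a bijection from such permutations to set partitions of {1,...,n} into k+1 blocks. -/
/-- `σ` avoids the mesh pattern `(132, {(2,0)})`. -/
def avoidsMesh132 {n : ℕ} (σ : Equiv.Perm (Fin n)) : Prop :=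
  ∀ i j k : Fin n, i < j → j < k → σ i < σ k → σ k < σ j →
    ∃ l : Fin n, j < l ∧ l < k ∧ σ l < σ i

/-- Positions `i` and `j` lie in the same maximal increasing run of `σ`:
every consecutive pair of positions between them is an ascent. -/
def sameRun {n : ℕ} (σ : Equiv.Perm (Fin n)) (i j : Fin n) : Prop :=
  ∀ m : Fin n, min (i : ℕ) (j : ℕ) ≤ (m : ℕ) →
    ∀ h : (m : ℕ) + 1 ≤ max (i : ℕ) (j : ℕ),
      σ m < σ ⟨(m : ℕ) + 1, lt_of_le_of_lt h (max_lt i.isLt j.isLt)⟩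

instance {n : ℕ} (σ : Equiv.Perm (Fin n)) (i j : Fin n) : Decidable (sameRun σ i j) := by
  unfold sameRun; apply Fintype.decidableForallFintype

/-- The set partition of the values `{1, …, n}` whose blocks are the sets of letters of the
maximal increasing runs of `σ`. -/
def runPartition {n : ℕ} (σ : Equiv.Perm (Fin n)) : Finset (Finset (Fin n)) :=
  Finset.univ.image (fun i : Fin n =>
    (Finset.univ.filter (fun j : Fin n => sameRun σ i j)).image σ)

namespace MeshAux

variable {n : ℕ}

/-- `P` is a set partition of `Fin n`. -/
def IsPartition (P : Finset (Finset (Fin n))) : Prop :=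
  (∀ B ∈ P, B.Nonempty) ∧ (P : Set (Finset (Fin n))).PairwiseDisjoint id ∧
    P.biUnion id = Finset.univ

lemma exists_block {P : Finset (Finset (Fin n))} (hP : IsPartition P) (v : Fin n) :
    ∃ B ∈ P, v ∈ B := by
  have : v ∈ P.biUnion id := by rw [hP.2.2]; exact Finset.mem_univ v
  simpa using this

lemma block_unique {P : Finset (Finset (Fin n))} (hP : IsPartition P) {B B' : Finset (Fin n)}
    {v : Fin n} (hB : B ∈ P) (hB' : B' ∈ P) (hv : v ∈ B) (hv' : v ∈ B') : B = B' := by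
  by_contra hne
  have hd := hP.2.1 hB hB' hne
  exact (Finset.disjoint_left.mp hd) hv hv'

def blockOf (P : Finset (Finset (Fin n))) (v : Fin n) : Finset (Fin n) :=
  (P.filter (fun B => v ∈ B)).biUnion id

lemma blockOf_eq {P : Finset (Finset (Fin n))} (hP : IsPartition P) {B : Finset (Fin n)}
    {v : Fin n} (hB : B ∈ P) (hv : v ∈ B) : blockOf P v = B := by
  have hf : P.filter (fun C => v ∈ C) = {B} := by
    ext C
    simp only [Finset.mem_filter, Finset.mem_singleton]
    constructor
    · rintro ⟨hC, hvC⟩; exact block_unique hP hC hB hvC hv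
    · rintro rfl; exact ⟨hB, hv⟩
  rw [blockOf, hf, Finset.singleton_biUnion, id]

/-- the minimum (as a natural number) of the block containing `v`. -/
def mv (P : Finset (Finset (Fin n))) (v : Fin n) : ℕ :=
  if h : (blockOf P v).Nonempty then ((blockOf P v).min' h : ℕ) else 0

lemma mv_eq {P : Finset (Finset (Fin n))} (hP : IsPartition P) {B : Finset (Fin n)}
    {v : Fin n} (hB : B ∈ P) (hv : v ∈ B) :
    mv P v = ((B.min' ⟨v, hv⟩ : Fin n) : ℕ) := by
  rw [mv, blockOf_eq hP hB hv, dif_pos ⟨v, hv⟩]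

lemma mv_le {P : Finset (Finset (Fin n))} (hP : IsPartition P) (v : Fin n) :
    mv P v ≤ (v : ℕ) := by
  obtain ⟨B, hB, hv⟩ := exists_block hP v
  rw [mv_eq hP hB hv]
  exact_mod_cast Finset.min'_le B v hv

lemma mv_eq_of_same {P : Finset (Finset (Fin n))} (hP : IsPartition P) {B : Finset (Fin n)}
    {v w : Fin n} (hB : B ∈ P) (hv : v ∈ B) (hw : w ∈ B) : mv P v = mv P w := by
  rw [mv_eq hP hB hv, mv_eq hP hB hw]

lemma same_block_of_mv_eq {P : Finset (Finset (Fin n))} (hP : IsPartition P)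
    {B B' : Finset (Fin n)} {v w : Fin n} (hB : B ∈ P) (hB' : B' ∈ P) (hv : v ∈ B)
    (hw : w ∈ B') (h : mv P v = mv P w) : B = B' := by
  rw [mv_eq hP hB hv, mv_eq hP hB' hw] at h
  have hmm : B.min' ⟨v, hv⟩ = B'.min' ⟨w, hw⟩ := Fin.ext h
  exact block_unique hP hB hB' (Finset.min'_mem B _) (hmm ▸ Finset.min'_mem B' _)

/-- there is a member of the block of `v` achieving `mv`. -/
lemma exists_mv_mem {P : Finset (Finset (Fin n))} (hP : IsPartition P) {B : Finset (Fin n)}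
    {v : Fin n} (hB : B ∈ P) (hv : v ∈ B) : ∃ u ∈ B, (u : ℕ) = mv P v := by
  refine ⟨B.min' ⟨v, hv⟩, Finset.min'_mem B _, ?_⟩
  rw [mv_eq hP hB hv]

def key (P : Finset (Finset (Fin n))) (v : Fin n) : ℕ := (n - 1 - mv P v) * n + (v : ℕ)

lemma nat_key_lt {a b v w N : ℕ} (hv : v < N) (hw : w < N) :
    a * N + v < b * N + w ↔ a < b ∨ (a = b ∧ v < w) := by
  rcases lt_trichotomy a b with h | h | h
  · constructor
    · intro _; exact Or.inl h
    · intro _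
      calc a * N + v < a * N + N := by omega
        _ = (a + 1) * N := by ring
        _ ≤ b * N := Nat.mul_le_mul_right N h
        _ ≤ b * N + w := Nat.le_add_right _ _
  · subst h; omega
  · have : b * N + w < a * N + v := by
      calc b * N + w < b * N + N := by omega
        _ = (b + 1) * N := by ring
        _ ≤ a * N := Nat.mul_le_mul_right N h
        _ ≤ a * N + v := Nat.le_add_right _ _
    omega

lemma key_lt_iff {P : Finset (Finset (Fin n))} (hP : IsPartition P) (v w : Fin n) :
    key P v < key P w ↔ mv P w < mv P v ∨ (mv P v = mv P w ∧ v < w) := by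
  have h1 : mv P v ≤ (v : ℕ) := mv_le hP v
  have h2 : mv P w ≤ (w : ℕ) := mv_le hP w
  have hv := v.isLt
  have hw := w.isLt
  rw [key, key, nat_key_lt hv hw, Fin.lt_def]
  omega

lemma key_inj {P : Finset (Finset (Fin n))} (hP : IsPartition P) {v w : Fin n}
    (h : key P v = key P w) : v = w := by
  have hv := v.isLt
  have hw := w.isLt
  have : ((n - 1 - mv P v) * n + (v : ℕ)) % n = ((n - 1 - mv P w) * n + (w : ℕ)) % n := by
    rw [← key, ← key, h]
  simp only [Nat.mul_add_mod', Nat.mod_eq_of_lt hv, Nat.mod_eq_of_lt hw] at this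
  exact Fin.ext this

end MeshAux

namespace MeshAux

variable {n : ℕ}

/-- monotone along an ascent run. -/
lemma le_of_ascents (σ : Equiv.Perm (Fin n)) :
    ∀ (b a : ℕ) (ha : a < n) (hb : b < n), a ≤ b →
      (∀ t, a ≤ t → t + 1 ≤ b → ∀ (ht1 : t + 1 < n) (ht : t < n),
        σ ⟨t, ht⟩ < σ ⟨t + 1, ht1⟩) →
      σ ⟨a, ha⟩ ≤ σ ⟨b, hb⟩ := by
  intro b
  induction b with
  | zero =>
    intro a ha hb hab _
    have : a = 0 := by omega
    subst this; exact le_refl _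
  | succ b ih =>
    intro a ha hb hab hasc
    rcases Nat.lt_or_ge a (b + 1) with h | h
    · have hab' : a ≤ b := by omega
      have hbn : b < n := by omega
      have h1 : σ ⟨a, ha⟩ ≤ σ ⟨b, hbn⟩ :=
        ih a ha hbn hab' (fun t hat htb ht1 ht => hasc t hat (by omega) ht1 ht)
      have h2 : σ ⟨b, hbn⟩ < σ ⟨b + 1, hb⟩ := hasc b hab' le_rfl hb hbn
      exact le_of_lt (lt_of_le_of_lt h1 h2)
    · have : a = b + 1 := by omega
      subst this; exact le_refl _

/-- if the value decreases there must be a descent in between. -/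
lemma exists_descent (σ : Equiv.Perm (Fin n)) {j k : Fin n} (hjk : j < k)
    (hd : σ k < σ j) :
    ∃ (d : ℕ) (hd1 : d + 1 < n) (hdn : d < n), (j : ℕ) ≤ d ∧ d + 1 ≤ (k : ℕ) ∧
      σ ⟨d + 1, hd1⟩ < σ ⟨d, hdn⟩ := by
  by_contra hno
  push_neg at hno
  have hmono : σ ⟨(j : ℕ), j.isLt⟩ ≤ σ ⟨(k : ℕ), k.isLt⟩ := by
    apply le_of_ascents σ (k : ℕ) (j : ℕ) j.isLt k.isLt (le_of_lt hjk)
    intro t hat htb ht1 ht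
    rcases lt_trichotomy (σ ⟨t, ht⟩) (σ ⟨t + 1, ht1⟩) with h | h | h
    · exact h
    · exact absurd (σ.injective (Fin.ext_iff.mpr (congrArg Fin.val h))) (by
        intro hh
        have : t = t + 1 := congrArg Fin.val hh
        omega)
    · exact absurd (hno t ht1 ht hat htb) (not_le_of_gt h)
  have : σ ⟨(j : ℕ), j.isLt⟩ = σ j := by congr
  have h2 : σ ⟨(k : ℕ), k.isLt⟩ = σ k := by congr
  rw [this, h2] at hmono
  exact absurd hmono (not_le_of_gt hd)

/-- characterization: avoiding means every descent bottom is smaller than everything before. -/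
lemma avoids_iff (σ : Equiv.Perm (Fin n)) :
    avoidsMesh132 σ ↔ ∀ (i d : Fin n) (h : (d : ℕ) + 1 < n), i ≤ d →
      σ ⟨(d : ℕ) + 1, h⟩ < σ d → σ ⟨(d : ℕ) + 1, h⟩ < σ i := by
  constructor
  · intro hav i d h hid hdesc
    by_contra hnot
    push_neg at hnot
    have hne : σ i ≠ σ ⟨(d : ℕ) + 1, h⟩ := by
      intro hh
      have : i = ⟨(d : ℕ) + 1, h⟩ := σ.injective hh
      have : (i : ℕ) = (d : ℕ) + 1 := by rw [this]
      omega
    have hlt : σ i < σ ⟨(d : ℕ) + 1, h⟩ := lt_of_le_of_ne hnot hne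
    have hid' : i < d := by
      rcases lt_or_eq_of_le hid with h' | h'
      · exact h'
      · subst h'; exact absurd hlt (not_lt_of_gt hdesc)
    obtain ⟨l, hl1, hl2, _⟩ := hav i d ⟨(d : ℕ) + 1, h⟩ hid'
      (by simp [Fin.lt_def]) hlt hdesc
    have h1' : (d : ℕ) < (l : ℕ) := hl1
    have h2' : (l : ℕ) < (d : ℕ) + 1 := hl2
    omega
  · intro hC i j k hij hjk h1 h2
    obtain ⟨d, hd1, hdn, hjd, hdk, hdesc⟩ := exists_descent σ hjk h2
    have hid : i ≤ (⟨d, hdn⟩ : Fin n) := by rw [Fin.le_def]; simp; omega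
    have hkey := hC i ⟨d, hdn⟩ hd1 hid hdesc
    rcases Nat.lt_or_ge (d + 1) (k : ℕ) with hlt | hge
    · exact ⟨⟨d + 1, hd1⟩, by rw [Fin.lt_def]; simp; omega, by rw [Fin.lt_def]; simpa, hkey⟩
    · have : (⟨d + 1, hd1⟩ : Fin n) = k := by apply Fin.ext; simp; omega
      rw [this] at hkey
      exact absurd h1 (not_lt_of_gt hkey)

end MeshAux

namespace MeshAux

variable {n : ℕ}

lemma sameRun_refl (σ : Equiv.Perm (Fin n)) (i : Fin n) : sameRun σ i i := by
  intro m h1 h2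
  exact absurd h2 (by omega)

lemma sameRun_symm {σ : Equiv.Perm (Fin n)} {i j : Fin n} (h : sameRun σ i j) :
    sameRun σ j i := by
  intro m h1 h2
  exact h m (by omega) (by omega)

lemma sameRun_trans {σ : Equiv.Perm (Fin n)} {i j k : Fin n} (h1 : sameRun σ i j)
    (h2 : sameRun σ j k) : sameRun σ i k := by
  intro m hm1 hm2
  rcases (by omega :
      (min (i : ℕ) (j : ℕ) ≤ (m : ℕ) ∧ (m : ℕ) + 1 ≤ max (i : ℕ) (j : ℕ)) ∨
      (min (j : ℕ) (k : ℕ) ≤ (m : ℕ) ∧ (m : ℕ) + 1 ≤ max (j : ℕ) (k : ℕ))) with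
    ⟨ha, hb⟩ | ⟨ha, hb⟩
  · exact h1 m ha hb
  · exact h2 m ha hb

lemma cls_eq {σ : Equiv.Perm (Fin n)} {i j : Fin n} (h : sameRun σ i j) :
    Finset.univ.filter (fun a : Fin n => sameRun σ i a) =
      Finset.univ.filter (fun a : Fin n => sameRun σ j a) := by
  ext a
  simp only [Finset.mem_filter, Finset.mem_univ, true_and]
  exact ⟨fun ha => sameRun_trans (sameRun_symm h) ha, fun ha => sameRun_trans h ha⟩

lemma runPartition_isPartition (σ : Equiv.Perm (Fin n)) : IsPartition (runPartition σ) := by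
  refine ⟨?_, ?_, ?_⟩
  · intro B hB
    simp only [runPartition, Finset.mem_image, Finset.mem_univ, true_and] at hB
    obtain ⟨i, rfl⟩ := hB
    exact ⟨σ i, Finset.mem_image.mpr ⟨i, by simp [sameRun_refl], rfl⟩⟩
  · intro B hB B' hB' hne
    simp only [Finset.mem_coe, runPartition, Finset.mem_image, Finset.mem_univ, true_and]
      at hB hB'
    obtain ⟨i, rfl⟩ := hB
    obtain ⟨j, rfl⟩ := hB'
    simp only [id, Function.onFun]
    rw [Finset.disjoint_left]
    intro v hv hv'
    simp only [Finset.mem_image, Finset.mem_filter, Finset.mem_univ, true_and] at hv hv'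
    obtain ⟨a, ha, rfl⟩ := hv
    obtain ⟨b, hb, hab⟩ := hv'
    have : b = a := σ.injective hab
    subst this
    exact hne (by rw [cls_eq ha, cls_eq hb])
  · apply Finset.eq_univ_of_forall
    intro v
    rw [Finset.mem_biUnion]
    refine ⟨(Finset.univ.filter (fun a : Fin n => sameRun σ (σ.symm v) a)).image σ, ?_, ?_⟩
    · simp only [runPartition, Finset.mem_image, Finset.mem_univ, true_and]
      exact ⟨σ.symm v, rfl⟩
    · simp only [id, Finset.mem_image]
      exact ⟨σ.symm v, by simp [sameRun_refl], σ.apply_symm_apply v⟩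

end MeshAux

namespace MeshAux

variable {n : ℕ} {P : Finset (Finset (Fin n))} {σ : Equiv.Perm (Fin n)}

lemma mv_anti (hP : IsPartition P) (hσ : StrictMono (fun i => key P (σ i)))
    {s t : Fin n} (h : s ≤ t) : mv P (σ t) ≤ mv P (σ s) := by
  rcases lt_or_eq_of_le h with h' | h'
  · have := hσ h'
    rw [key_lt_iff hP] at this
    rcases this with h'' | ⟨h'', _⟩ <;> omega
  · subst h'; exact le_refl _

lemma lt_of_mv_eq (hP : IsPartition P) (hσ : StrictMono (fun i => key P (σ i)))
    {s t : Fin n} (h : s < t) (hmv : mv P (σ s) = mv P (σ t)) : σ s < σ t := by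
  have := hσ h
  rw [key_lt_iff hP] at this
  rcases this with h'' | ⟨_, h''⟩
  · omega
  · exact h''

lemma mv_lt_of_desc (hP : IsPartition P) (hσ : StrictMono (fun i => key P (σ i)))
    {s t : Fin n} (h : s < t) (hlt : σ t < σ s) : mv P (σ t) < mv P (σ s) := by
  have := hσ h
  rw [key_lt_iff hP] at this
  rcases this with h'' | ⟨_, h''⟩
  · exact h''
  · exact absurd h'' (not_lt_of_gt hlt)

lemma start_min (hP : IsPartition P) (hσ : StrictMono (fun i => key P (σ i)))
    (q : Fin n) (hq : ∀ p : Fin n, p < q → mv P (σ p) ≠ mv P (σ q)) :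
    ((σ q : Fin n) : ℕ) = mv P (σ q) := by
  obtain ⟨B, hB, hmem⟩ := exists_block hP (σ q)
  obtain ⟨u, huB, humv⟩ := exists_mv_mem hP hB hmem
  set p := σ.symm u with hp
  have hσp : σ p = u := σ.apply_symm_apply u
  have hmvp : mv P (σ p) = mv P (σ q) := by
    rw [hσp]; exact mv_eq_of_same hP hB huB hmem
  rcases lt_trichotomy p q with h | h | h
  · exact absurd hmvp (hq p h)
  · subst h
    rw [← hσp] at humv
    exact humv
  · have hlt := lt_of_mv_eq hP hσ h hmvp.symm
    have h1 : (u : ℕ) ≤ (σ q : ℕ) := by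
      rw [humv]; exact mv_le hP (σ q)
    rw [← hσp] at h1
    rw [Fin.lt_def] at hlt
    omega

lemma desc_start (hP : IsPartition P) (hσ : StrictMono (fun i => key P (σ i)))
    (t : Fin n) (h : (t : ℕ) + 1 < n)
    (hdrop : mv P (σ ⟨(t : ℕ) + 1, h⟩) < mv P (σ t)) :
    ((σ ⟨(t : ℕ) + 1, h⟩ : Fin n) : ℕ) = mv P (σ ⟨(t : ℕ) + 1, h⟩) := by
  apply start_min hP hσ
  intro p hp
  have hple : p ≤ t := by
    rw [Fin.lt_def] at hp
    rw [Fin.le_def]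
    simp at hp
    omega
  have := mv_anti hP hσ hple
  omega

lemma desc_iff_mv_lt (hP : IsPartition P) (hσ : StrictMono (fun i => key P (σ i)))
    (t : Fin n) (h : (t : ℕ) + 1 < n) :
    σ ⟨(t : ℕ) + 1, h⟩ < σ t ↔ mv P (σ ⟨(t : ℕ) + 1, h⟩) < mv P (σ t) := by
  constructor
  · intro hd
    exact mv_lt_of_desc hP hσ (by simp [Fin.lt_def]) hd
  · intro hdrop
    have h1 := desc_start hP hσ t h hdrop
    have h2 := mv_le hP (σ t)
    rw [Fin.lt_def]
    omega

lemma avoids_of_sorted (hP : IsPartition P) (hσ : StrictMono (fun i => key P (σ i))) :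
    avoidsMesh132 σ := by
  rw [avoids_iff]
  intro i d h hid hdesc
  have hdrop := (desc_iff_mv_lt hP hσ d h).mp hdesc
  have h1 := desc_start hP hσ d h hdrop
  have h2 := mv_anti hP hσ hid
  have h3 := mv_le hP (σ i)
  rw [Fin.lt_def]
  omega

/-- discrete descent existence for nat functions -/
lemma exists_drop (f : ℕ → ℕ) :
    ∀ (b a : ℕ), a ≤ b → f b < f a → ∃ t, a ≤ t ∧ t + 1 ≤ b ∧ f (t + 1) < f t := by
  intro b
  induction b with
  | zero =>
    intro a ha hf
    have : a = 0 := by omega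
    subst this; omega
  | succ b ih =>
    intro a ha hf
    rcases Nat.lt_or_ge a (b + 1) with h | h
    · rcases Nat.lt_or_ge (f (b + 1)) (f b) with h' | h'
      · exact ⟨b, by omega, le_refl _, h'⟩
      · obtain ⟨t, ht1, ht2, ht3⟩ := ih a (by omega) (by omega)
        exact ⟨t, ht1, by omega, ht3⟩
    · have : a = b + 1 := by omega
      subst this; omega

lemma sameRun_iff_of_le (hP : IsPartition P) (hσ : StrictMono (fun i => key P (σ i)))
    {i j : Fin n} (hij : i ≤ j) : sameRun σ i j ↔ mv P (σ i) = mv P (σ j) := by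
  have hijn : (i : ℕ) ≤ (j : ℕ) := hij
  constructor
  · intro hrun
    have hle : mv P (σ j) ≤ mv P (σ i) := mv_anti hP hσ hij
    rcases lt_or_eq_of_le hle with hlt | heq
    case inr => exact heq.symm
    · exfalso
      set f : ℕ → ℕ := fun t => if ht : t < n then mv P (σ ⟨t, ht⟩) else 0 with hf
      have hfi : f (i : ℕ) = mv P (σ i) := by
        rw [hf]; simp only [dif_pos i.isLt]
      have hfj : f (j : ℕ) = mv P (σ j) := by
        rw [hf]; simp only [dif_pos j.isLt]
      obtain ⟨t, ht1, ht2, ht3⟩ := exists_drop f (j : ℕ) (i : ℕ) hijn (by omega)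
      have htn : t < n := by omega
      have ht1n : t + 1 < n := by omega
      rw [hf] at ht3
      simp only [dif_pos htn, dif_pos ht1n] at ht3
      have hdesc := (desc_iff_mv_lt hP hσ ⟨t, htn⟩ ht1n).mpr ht3
      have hasc := hrun ⟨t, htn⟩ (by simp; omega) (by simp; omega)
      exact absurd hasc (not_lt_of_gt hdesc)
  · intro heq m h1 h2
    have hm1 : (i : ℕ) ≤ (m : ℕ) := by omega
    have hm2 : (m : ℕ) + 1 ≤ (j : ℕ) := by omega
    have hmn : (m : ℕ) + 1 < n := by omega
    have e1 : mv P (σ m) ≤ mv P (σ i) := mv_anti hP hσ (by rw [Fin.le_def]; omega)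
    have e2 : mv P (σ ⟨(m : ℕ) + 1, hmn⟩) ≤ mv P (σ m) :=
      mv_anti hP hσ (by rw [Fin.le_def]; simp)
    have e3 : mv P (σ j) ≤ mv P (σ ⟨(m : ℕ) + 1, hmn⟩) :=
      mv_anti hP hσ (by rw [Fin.le_def]; simp; omega)
    have : mv P (σ m) = mv P (σ ⟨(m : ℕ) + 1, hmn⟩) := by omega
    exact lt_of_mv_eq hP hσ (by rw [Fin.lt_def]; simp) this

lemma sameRun_iff (hP : IsPartition P) (hσ : StrictMono (fun i => key P (σ i)))
    (i j : Fin n) : sameRun σ i j ↔ mv P (σ i) = mv P (σ j) := by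
  rcases le_total i j with h | h
  · exact sameRun_iff_of_le hP hσ h
  · have := sameRun_iff_of_le hP hσ h
    constructor
    · intro hh
      exact (this.mp (sameRun_symm hh)).symm
    · intro hh
      exact sameRun_symm (this.mpr hh.symm)

end MeshAux

namespace MeshAux

variable {n : ℕ} {P : Finset (Finset (Fin n))} {σ : Equiv.Perm (Fin n)}

lemma image_cls (hP : IsPartition P) (hσ : StrictMono (fun i => key P (σ i)))
    (i : Fin n) {B : Finset (Fin n)} (hB : B ∈ P) (hm : σ i ∈ B) :
    (Finset.univ.filter (fun j : Fin n => sameRun σ i j)).image σ = B := by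
  ext v
  simp only [Finset.mem_image, Finset.mem_filter, Finset.mem_univ, true_and]
  constructor
  · rintro ⟨j, hj, rfl⟩
    rw [sameRun_iff hP hσ] at hj
    obtain ⟨C, hC, hvC⟩ := exists_block hP (σ j)
    have : B = C := same_block_of_mv_eq hP hB hC hm hvC hj
    rw [this]; exact hvC
  · intro hv
    refine ⟨σ.symm v, ?_, σ.apply_symm_apply v⟩
    rw [sameRun_iff hP hσ]
    have : σ (σ.symm v) = v := σ.apply_symm_apply v
    rw [this]
    exact mv_eq_of_same hP hB hm hv

lemma runPartition_eq (hP : IsPartition P) (hσ : StrictMono (fun i => key P (σ i))) :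
    runPartition σ = P := by
  ext B
  simp only [runPartition, Finset.mem_image, Finset.mem_univ, true_and]
  constructor
  · rintro ⟨i, rfl⟩
    obtain ⟨C, hC, hm⟩ := exists_block hP (σ i)
    rw [image_cls hP hσ i hC hm]
    exact hC
  · intro hB
    obtain ⟨v, hv⟩ := hP.1 B hB
    refine ⟨σ.symm v, ?_⟩
    apply image_cls hP hσ _ hB
    rw [σ.apply_symm_apply]
    exact hv

lemma card_partition (hn : 0 < n) (hP : IsPartition P)
    (hσ : StrictMono (fun i => key P (σ i))) : P.card = des σ + 1 := by
  set z : Fin n := ⟨0, hn⟩ with hz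
  obtain ⟨B₀, hB₀, hm₀⟩ := exists_block hP (σ z)
  have hcard : (Finset.univ.filter (fun i : Fin n =>
      ∃ h : (i : ℕ) + 1 < n, σ ⟨(i : ℕ) + 1, h⟩ < σ i)).card = (P.erase B₀).card := by
    refine Finset.card_bij (fun (a : Fin n) (ha : a ∈ Finset.univ.filter (fun i : Fin n =>
        ∃ h : (i : ℕ) + 1 < n, σ ⟨(i : ℕ) + 1, h⟩ < σ i)) =>
      blockOf P (σ ⟨(a : ℕ) + 1, ((Finset.mem_filter.mp ha).2).choose⟩)) ?_ ?_ ?_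
    · intro a ha
      have hd := ((Finset.mem_filter.mp ha).2).choose_spec
      have h1 : (a : ℕ) + 1 < n := ((Finset.mem_filter.mp ha).2).choose
      obtain ⟨C, hC, hmC⟩ := exists_block hP (σ ⟨(a : ℕ) + 1, h1⟩)
      show blockOf P (σ ⟨(a : ℕ) + 1, h1⟩) ∈ P.erase B₀
      rw [blockOf_eq hP hC hmC]
      rw [Finset.mem_erase]
      refine ⟨?_, hC⟩
      intro hCB
      subst hCB
      have heq : mv P (σ ⟨(a : ℕ) + 1, h1⟩) = mv P (σ z) := mv_eq_of_same hP hC hmC hm₀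
      have hdrop := (desc_iff_mv_lt hP hσ a h1).mp hd
      have hanti : mv P (σ a) ≤ mv P (σ z) := mv_anti hP hσ (by rw [Fin.le_def]; simp [hz])
      omega
    · intro a1 ha1 a2 ha2 heq
      have hd1 := ((Finset.mem_filter.mp ha1).2).choose_spec
      have hd2 := ((Finset.mem_filter.mp ha2).2).choose_spec
      have h1 : (a1 : ℕ) + 1 < n := ((Finset.mem_filter.mp ha1).2).choose
      have h2 : (a2 : ℕ) + 1 < n := ((Finset.mem_filter.mp ha2).2).choose
      obtain ⟨C1, hC1, hmC1⟩ := exists_block hP (σ ⟨(a1 : ℕ) + 1, h1⟩)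
      obtain ⟨C2, hC2, hmC2⟩ := exists_block hP (σ ⟨(a2 : ℕ) + 1, h2⟩)
      have heq' : blockOf P (σ ⟨(a1 : ℕ) + 1, h1⟩) = blockOf P (σ ⟨(a2 : ℕ) + 1, h2⟩) := heq
      rw [blockOf_eq hP hC1 hmC1, blockOf_eq hP hC2 hmC2] at heq'
      subst heq'
      have hmv : mv P (σ ⟨(a1 : ℕ) + 1, h1⟩) = mv P (σ ⟨(a2 : ℕ) + 1, h2⟩) :=
        mv_eq_of_same hP hC1 hmC1 hmC2
      by_contra hne
      have hne' : (a1 : ℕ) ≠ (a2 : ℕ) := fun hh => hne (Fin.ext hh)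
      rcases Nat.lt_or_ge (a1 : ℕ) (a2 : ℕ) with hlt | hge
      · have e1 : mv P (σ a2) ≤ mv P (σ ⟨(a1 : ℕ) + 1, h1⟩) :=
          mv_anti hP hσ (by rw [Fin.le_def]; simp; omega)
        have e2 := (desc_iff_mv_lt hP hσ a2 h2).mp hd2
        omega
      · have hlt : (a2 : ℕ) < (a1 : ℕ) := by omega
        have e1 : mv P (σ a1) ≤ mv P (σ ⟨(a2 : ℕ) + 1, h2⟩) :=
          mv_anti hP hσ (by rw [Fin.le_def]; simp; omega)
        have e2 := (desc_iff_mv_lt hP hσ a1 h1).mp hd1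
        omega
    · intro B hBmem
      rw [Finset.mem_erase] at hBmem
      obtain ⟨hne, hBP⟩ := hBmem
      obtain ⟨v, hv⟩ := hP.1 B hBP
      set S := Finset.univ.filter (fun p : Fin n => σ p ∈ B) with hS
      have hSne : S.Nonempty := ⟨σ.symm v, by simp [hS, σ.apply_symm_apply, hv]⟩
      set q := S.min' hSne with hq
      have hqS : q ∈ S := S.min'_mem hSne
      have hqB : σ q ∈ B := (Finset.mem_filter.mp hqS).2
      have hq0 : (q : ℕ) ≠ 0 := by
        intro h0
        have : q = z := Fin.ext (by simp [hz, h0])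
        rw [this] at hqB
        exact hne (block_unique hP hBP hB₀ hqB hm₀)
      have hqn := q.isLt
      set a : Fin n := ⟨(q : ℕ) - 1, by omega⟩ with ha
      have ha1 : (a : ℕ) + 1 < n := by simp [ha]; omega
      have haq : (⟨(a : ℕ) + 1, ha1⟩ : Fin n) = q := Fin.ext (by simp [ha]; omega)
      -- descent at a
      have hmvle : mv P (σ ⟨(a : ℕ) + 1, ha1⟩) ≤ mv P (σ a) :=
        mv_anti hP hσ (by rw [Fin.le_def]; simp [ha])
      have hmvne : mv P (σ ⟨(a : ℕ) + 1, ha1⟩) ≠ mv P (σ a) := by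
        intro hmveq
        obtain ⟨C, hC, hmC⟩ := exists_block hP (σ a)
        have : B = C := by
          apply same_block_of_mv_eq hP hBP hC (haq ▸ hqB) hmC
          rw [← hmveq, haq]
        have haB : σ a ∈ B := this ▸ hmC
        have haS : a ∈ S := by rw [hS]; simp [haB]
        have := S.min'_le a haS
        rw [← hq] at this
        have : (q : ℕ) ≤ (a : ℕ) := this
        simp [ha] at this
        omega
      have hdesc : σ ⟨(a : ℕ) + 1, ha1⟩ < σ a :=
        (desc_iff_mv_lt hP hσ a ha1).mpr (by omega)
      have hain : a ∈ Finset.univ.filter (fun i : Fin n =>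
          ∃ h : (i : ℕ) + 1 < n, σ ⟨(i : ℕ) + 1, h⟩ < σ i) := by
        rw [Finset.mem_filter]
        exact ⟨Finset.mem_univ a, ⟨ha1, hdesc⟩⟩
      refine ⟨a, hain, ?_⟩
      show blockOf P (σ ⟨(a : ℕ) + 1, ha1⟩) = B
      rw [haq]
      exact blockOf_eq hP hBP hqB
  rw [des, hcard, Finset.card_erase_of_mem hB₀]
  have : 0 < P.card := Finset.card_pos.mpr ⟨B₀, hB₀⟩
  omega

end MeshAux

namespace MeshAux

variable {n : ℕ} {P : Finset (Finset (Fin n))} {σ : Equiv.Perm (Fin n)}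

lemma strictMono_of_adj (f : Fin n → ℕ)
    (h : ∀ (t : ℕ) (ht1 : t + 1 < n), f ⟨t, by omega⟩ < f ⟨t + 1, ht1⟩) :
    StrictMono f := by
  have key : ∀ (b : ℕ) (hb : b < n) (a : ℕ) (ha : a < n), a < b → f ⟨a, ha⟩ < f ⟨b, hb⟩ := by
    intro b
    induction b with
    | zero => intro hb a ha hab; omega
    | succ b ih =>
      intro hb a ha hab
      rcases Nat.lt_or_ge a b with h' | h'
      · exact lt_trans (ih (by omega) a ha h') (h b hb)
      · have : a = b := by omega
        subst this
        exact h a hb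
  intro a b hab
  have := key (b : ℕ) b.isLt (a : ℕ) a.isLt hab
  simpa using this

lemma avoid_strictMono (σ : Equiv.Perm (Fin n)) (hav : avoidsMesh132 σ) :
    StrictMono (fun i => key (runPartition σ) (σ i)) := by
  have hP := runPartition_isPartition σ
  apply strictMono_of_adj
  intro t ht1
  have htn : t < n := by omega
  show key (runPartition σ) (σ ⟨t, htn⟩) < key (runPartition σ) (σ ⟨t + 1, ht1⟩)
  have hBmem : (Finset.univ.filter (fun j : Fin n => sameRun σ ⟨t, htn⟩ j)).image σ ∈
      runPartition σ := by
    rw [runPartition]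
    exact Finset.mem_image.mpr ⟨⟨t, htn⟩, Finset.mem_univ _, rfl⟩
  have hiB : σ ⟨t, htn⟩ ∈
      (Finset.univ.filter (fun j : Fin n => sameRun σ ⟨t, htn⟩ j)).image σ :=
    Finset.mem_image.mpr ⟨⟨t, htn⟩, by simp [sameRun_refl], rfl⟩
  have hne : σ ⟨t, htn⟩ ≠ σ ⟨t + 1, ht1⟩ := by
    intro hh
    have h2 := σ.injective hh
    have : t = t + 1 := congrArg Fin.val h2
    omega
  rcases lt_or_gt_of_ne hne with hasc | hdesc
  · -- ascent: same run
    have hrun : sameRun σ ⟨t, htn⟩ ⟨t + 1, ht1⟩ := by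
      intro m h1 h2
      have h1' : min t (t + 1) ≤ (m : ℕ) := h1
      have h2' : (m : ℕ) + 1 ≤ max t (t + 1) := h2
      have hm : (m : ℕ) = t := by omega
      have hmi : m = (⟨t, htn⟩ : Fin n) := Fin.ext hm
      subst hmi
      exact hasc
    have hi'B : σ ⟨t + 1, ht1⟩ ∈
        (Finset.univ.filter (fun j : Fin n => sameRun σ ⟨t, htn⟩ j)).image σ :=
      Finset.mem_image.mpr ⟨⟨t + 1, ht1⟩, by simp [hrun], rfl⟩
    exact (key_lt_iff hP _ _).mpr
      (Or.inr ⟨mv_eq_of_same hP hBmem hiB hi'B, hasc⟩)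
  · -- descent
    refine (key_lt_iff hP _ _).mpr (Or.inl ?_)
    obtain ⟨u, huB, humv⟩ := exists_mv_mem hP hBmem hiB
    obtain ⟨j, hjmem, hju⟩ := Finset.mem_image.mp huB
    have hjrun : sameRun σ ⟨t, htn⟩ j := (Finset.mem_filter.mp hjmem).2
    have hjt : (j : ℕ) ≤ t := by
      by_contra hgt
      push_neg at hgt
      have hasc' := hjrun ⟨t, htn⟩ (show min t (j : ℕ) ≤ t by omega)
        (show t + 1 ≤ max t (j : ℕ) by omega)
      exact absurd hasc' (not_lt_of_gt hdesc)
    have hkey := (avoids_iff σ).mp hav j ⟨t, htn⟩ ht1 hjt hdesc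
    have h2' : ((σ ⟨t + 1, ht1⟩ : Fin n) : ℕ) < (u : ℕ) := by
      rw [← hju]; exact hkey
    have h1' := mv_le hP (σ ⟨t + 1, ht1⟩)
    omega

lemma sorted_unique (hP : IsPartition P) {σ τ : Equiv.Perm (Fin n)}
    (hσ : StrictMono (fun i => key P (σ i))) (hτ : StrictMono (fun i => key P (τ i))) :
    σ = τ := by
  have hr : Set.range (fun i => key P (σ i)) = Set.range (fun i => key P (τ i)) := by
    have h1 : Set.range (fun i => key P (σ i)) = Set.range (key P) :=
      σ.surjective.range_comp (key P)
    have h2 : Set.range (fun i => key P (τ i)) = Set.range (key P) :=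
      τ.surjective.range_comp (key P)
    rw [h1, h2]
  have hwf : WellFoundedLT (Fin n) := inferInstance
  have := (@StrictMono.range_inj (Fin n) ℕ _ _ hwf _ _ hσ hτ).mp hr
  apply Equiv.ext
  intro i
  exact key_inj hP (congrFun this i)

lemma exists_sorted (hP : IsPartition P) :
    ∃ σ : Equiv.Perm (Fin n), StrictMono (fun i => key P (σ i)) := by
  refine ⟨Tuple.sort (key P), ?_⟩
  have hmono : Monotone (key P ∘ Tuple.sort (key P)) := Tuple.monotone_sort (key P)
  have hinj : Function.Injective (key P ∘ Tuple.sort (key P)) := by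
    intro a b hab
    exact (Tuple.sort (key P)).injective (key_inj hP hab)
  exact hmono.strictMono_of_injective hinj

end MeshAux


/-- The map sending a permutation avoiding the mesh pattern `(132,{(2,0)})` with exactly `k`
descents to the set partition whose blocks are its maximal increasing runs is a bijection onto
the set partitions of `{1, …, n}` into `k + 1` nonempty blocks. -/
theorem runPartition_bijOn (n k : ℕ) (hn : 1 ≤ n) :
    Set.BijOn (runPartition (n := n))
      {σ : Equiv.Perm (Fin n) | avoidsMesh132 σ ∧ des σ = k}
      {P : Finset (Finset (Fin n)) | P.card = k + 1 ∧ (∀ B ∈ P, B.Nonempty) ∧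
        (P : Set (Finset (Fin n))).PairwiseDisjoint id ∧
        P.biUnion id = Finset.univ} := by
  refine ⟨?_, ?_, ?_⟩
  · rintro σ ⟨hav, hdes⟩
    have hP := MeshAux.runPartition_isPartition σ
    have hsm := MeshAux.avoid_strictMono σ hav
    have hcard := MeshAux.card_partition (by omega) hP hsm
    exact ⟨by rw [hcard, hdes], hP.1, hP.2.1, hP.2.2⟩
  · rintro σ ⟨havσ, -⟩ τ ⟨havτ, -⟩ heq
    have hsσ := MeshAux.avoid_strictMono σ havσ
    have hsτ := MeshAux.avoid_strictMono τ havτ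
    rw [heq] at hsσ
    exact MeshAux.sorted_unique (MeshAux.runPartition_isPartition τ) hsσ hsτ
  · rintro P ⟨hcard, h1, h2, h3⟩
    have hP : MeshAux.IsPartition P := ⟨h1, h2, h3⟩
    obtain ⟨σ, hσ⟩ := MeshAux.exists_sorted hP
    have hav := MeshAux.avoids_of_sorted hP hσ
    have hrp := MeshAux.runPartition_eq hP hσ
    have hdes : des σ = k := by
      have := MeshAux.card_partition (by omega) hP hσ
      omega
    exact ⟨σ, ⟨hav, hdes⟩, hrp⟩
end

section
/- If σ = a_1...a_n avoids both 321 and the mesh pattern (231,{(1,0)}), then the subsequence of σ consisting of all letters that are not descent tops is increasing. -/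
def avoids321 {n : ℕ} (σ : Equiv.Perm (Fin n)) : Prop :=
  ¬ ∃ i j k : Fin n, i < j ∧ j < k ∧ σ j < σ i ∧ σ k < σ j

def avoidsMesh231 {n : ℕ} (σ : Equiv.Perm (Fin n)) : Prop :=
  ∀ i j k : Fin n, i < j → j < k → σ k < σ i → σ i < σ j →
    ∃ l : Fin n, i < l ∧ l < j ∧ σ l < σ k

/-- The letter at position `i` is a descent top. -/
def DescTopAt {n : ℕ} (σ : Equiv.Perm (Fin n)) (i : Fin n) : Prop :=
  ∃ h : (i : ℕ) + 1 < n, σ ⟨(i : ℕ) + 1, h⟩ < σ i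

/-- In a permutation avoiding `321` and the mesh pattern `(231,{(1,0)})`, the subsequence of
letters that are not descent tops is increasing. -/
theorem nonDescTops_increasing (n : ℕ) (σ : Equiv.Perm (Fin n))
    (h1 : avoids321 σ) (h2 : avoidsMesh231 σ) :
    ∀ i j : Fin n, i < j → ¬ DescTopAt σ i → ¬ DescTopAt σ j → σ i < σ j := by
  intro i j hij hi _
  have hn : (i : ℕ) + 1 < n := lt_of_le_of_lt (Nat.succ_le_of_lt hij) j.isLt
  set i' : Fin n := ⟨(i : ℕ) + 1, hn⟩ with hi'def
  have hii' : i < i' := by simp [Fin.lt_def, hi'def]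
  have hne : σ i ≠ σ i' := fun h => absurd (σ.injective h) (ne_of_lt hii')
  have hlt : σ i < σ i' := by
    rcases lt_or_ge (σ i) (σ i') with h | h
    · exact h
    · exact absurd ⟨hn, lt_of_le_of_ne h (Ne.symm hne)⟩ hi
  rcases eq_or_lt_of_le (Nat.succ_le_of_lt hij) with heq | hlt2
  · have : i' = j := Fin.ext heq
    rwa [this] at hlt
  · have hi'j : i' < j := hlt2
    by_contra hc
    push_neg at hc
    have hne2 : σ j ≠ σ i := fun h => absurd (σ.injective h) (ne_of_gt hij)
    have hji : σ j < σ i := lt_of_le_of_ne hc hne2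
    obtain ⟨l, hl1, hl2, _⟩ := h2 i i' j hii' hi'j hji hlt
    have : (i : ℕ) < l ∧ (l : ℕ) < (i : ℕ) + 1 := ⟨hl1, hl2⟩
    omega
end

section
/- For n ≥ 2, a permutation σ = a_1...a_n avoids the barred pattern bar1bar243 if and only if a_1 = 1 and a_2 = 2. Consequently |Av_n(bar1bar243)| = (n-2)!. -/
/-- `σ` avoids the barred pattern `bar1 bar2 4 3`: every occurrence `a_i a_j` of `21`
extends on the left to an occurrence `a_k a_l a_i a_j` of `1243` with `k < l < i`. -/
def avoidsBar1243 {n : ℕ} (σ : Equiv.Perm (Fin n)) : Prop :=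
  ∀ i j : Fin n, i < j → σ j < σ i →
    ∃ k l : Fin n, k < l ∧ l < i ∧ σ k < σ l ∧ σ l < σ j

theorem avoidsBar1243_iff (n : ℕ) (hn : 2 ≤ n) :
    (∀ σ : Equiv.Perm (Fin n),
      avoidsBar1243 σ ↔
        σ ⟨0, by omega⟩ = ⟨0, by omega⟩ ∧ σ ⟨1, by omega⟩ = ⟨1, by omega⟩) ∧
    Nat.card {σ : Equiv.Perm (Fin n) // avoidsBar1243 σ} = Nat.factorial (n - 2) := by
  have key : ∀ σ : Equiv.Perm (Fin n),
      avoidsBar1243 σ ↔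
        σ ⟨0, by omega⟩ = ⟨0, by omega⟩ ∧ σ ⟨1, by omega⟩ = ⟨1, by omega⟩ := by
    intro σ
    set z0 : Fin n := ⟨0, by omega⟩ with hz0def
    set z1 : Fin n := ⟨1, by omega⟩ with hz1def
    have hz0 : z0.val = 0 := rfl
    have hz1 : z1.val = 1 := rfl
    constructor
    · intro h
      have h0 : σ z0 = z0 := by
        by_contra h0
        set j := σ.symm z0 with hjdef
        have hj : σ j = z0 := σ.apply_symm_apply _
        have hjne : j ≠ z0 := fun hc => h0 (hc ▸ hj)
        have hj0 : z0 < j := by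
          rw [Fin.lt_def]
          have := Fin.val_ne_of_ne hjne
          omega
        have hlt : σ j < σ z0 := by
          rw [hj, Fin.lt_def]
          have := Fin.val_ne_of_ne (h0 : σ z0 ≠ z0)
          omega
        obtain ⟨k, l, hkl, hl, -, -⟩ := h _ _ hj0 hlt
        rw [Fin.lt_def] at hkl hl
        omega
      refine ⟨h0, ?_⟩
      by_contra h1
      set j := σ.symm z1 with hjdef
      have hj : σ j = z1 := σ.apply_symm_apply _
      have hjne1 : j ≠ z1 := fun hc => h1 (hc ▸ hj)
      have hjne0 : j ≠ z0 := by
        intro hc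
        rw [hc, h0] at hj
        have := congrArg Fin.val hj
        omega
      have hj1 : z1 < j := by
        rw [Fin.lt_def]
        have := Fin.val_ne_of_ne hjne1
        have := Fin.val_ne_of_ne hjne0
        omega
      have hlt : σ j < σ z1 := by
        rw [hj, Fin.lt_def]
        have hne0 : σ z1 ≠ z0 := by
          intro hc
          have := σ.injective (hc.trans h0.symm)
          have := congrArg Fin.val this
          omega
        have := Fin.val_ne_of_ne (h1 : σ z1 ≠ z1)
        have := Fin.val_ne_of_ne hne0
        omega
      obtain ⟨k, l, hkl, hl, -, -⟩ := h _ _ hj1 hlt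
      rw [Fin.lt_def] at hkl hl
      omega
    · rintro ⟨h0, h1⟩ i j hij hji
      rw [Fin.lt_def] at hij hji
      have hine0 : i ≠ z0 := by
        intro hc
        rw [hc, h0] at hji
        omega
      have hine1 : i ≠ z1 := by
        intro hc
        rw [hc, h1] at hji
        have : σ j = z0 := Fin.ext (by omega)
        have := congrArg Fin.val (σ.injective (this.trans h0.symm))
        omega
      have hi2 : 2 ≤ i.val := by
        have := Fin.val_ne_of_ne hine0
        have := Fin.val_ne_of_ne hine1
        omega
      have hjne0 : σ j ≠ z0 := by
        intro hc
        have := congrArg Fin.val (σ.injective (hc.trans h0.symm))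
        omega
      have hjne1 : σ j ≠ z1 := by
        intro hc
        have := congrArg Fin.val (σ.injective (hc.trans h1.symm))
        omega
      refine ⟨z0, z1, ?_, ?_, ?_, ?_⟩ <;> rw [Fin.lt_def]
      · omega
      · omega
      · rw [h0, h1]; omega
      · rw [h1]
        have := Fin.val_ne_of_ne hjne0
        have := Fin.val_ne_of_ne hjne1
        omega
  refine ⟨key, ?_⟩
  have e1 : {σ : Equiv.Perm (Fin n) // avoidsBar1243 σ} ≃
      {σ : Equiv.Perm (Fin n) // ∀ x : Fin n, ¬(2 ≤ x.val) → σ x = x} := by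
    refine Equiv.subtypeEquivRight fun σ => ?_
    rw [key σ]
    constructor
    · rintro ⟨h0, h1⟩ x hx
      simp only [not_le] at hx
      rcases (by omega : x.val = 0 ∨ x.val = 1) with h | h
      · have : x = ⟨0, by omega⟩ := Fin.ext h
        rw [this, h0]
      · have : x = ⟨1, by omega⟩ := Fin.ext h
        rw [this, h1]
    · intro h
      exact ⟨h _ (by simp), h _ (by simp)⟩
  have e2 : Equiv.Perm {x : Fin n // 2 ≤ x.val} ≃
      {σ : Equiv.Perm (Fin n) // ∀ x : Fin n, ¬(2 ≤ x.val) → σ x = x} :=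
    Equiv.Perm.subtypeEquivSubtypePerm _
  have e3 : {x : Fin n // 2 ≤ x.val} ≃ Fin (n - 2) :=
    { toFun := fun x => ⟨x.1.val - 2, by have := x.1.isLt; have := x.2; omega⟩
      invFun := fun y => ⟨⟨y.val + 2, by have := y.isLt; omega⟩, by simp⟩
      left_inv := fun x => by
        have := x.2
        exact Subtype.ext (Fin.ext (by simp; omega))
      right_inv := fun y => Fin.ext (by simp) }
  rw [Nat.card_congr (e1.trans e2.symm)]
  rw [Nat.card_eq_fintype_card, Fintype.card_perm, Fintype.card_congr e3, Fintype.card_fin]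
end

section
/- For n ≥ 2, the descent generating function over permutations of {1,...,n} avoiding the barred pattern bar1bar243 equals the Eulerian polynomial A_{n-2}(q): ∑_{σ ∈ Av_n(bar1bar243)} q^{des σ} = ∑_{τ ∈ S_{n-2}} q^{des τ}. -/
open Polynomial

instance {n : ℕ} : DecidablePred (avoidsBar1243 (n := n)) := fun σ => by
  unfold avoidsBar1243; apply Fintype.decidableForallFintype

section aux
variable {m : ℕ}

def ext2 (τ : Equiv.Perm (Fin m)) : Equiv.Perm (Fin (2 + m)) :=
  finSumFinEquiv.permCongr (Equiv.sumCongr (Equiv.refl (Fin 2)) τ)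

lemma ext2_lt (τ : Equiv.Perm (Fin m)) (a : Fin (2 + m)) (ha : (a : ℕ) < 2) :
    ext2 τ a = a := by
  have h : a = finSumFinEquiv (Sum.inl ⟨a, ha⟩) := by
    apply Fin.ext; simp
  have hs : finSumFinEquiv.symm a = Sum.inl ⟨a, ha⟩ := by
    rw [Equiv.symm_apply_eq]; exact h
  simp [ext2, Equiv.permCongr_apply, hs]

lemma ext2_ge (τ : Equiv.Perm (Fin m)) (b : Fin m) :
    ext2 τ ⟨2 + (b : ℕ), by omega⟩ = ⟨2 + (τ b : ℕ), by have := (τ b).2; omega⟩ := by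
  have h : (⟨2 + (b : ℕ), by omega⟩ : Fin (2 + m)) = finSumFinEquiv (Sum.inr b) := by
    apply Fin.ext; simp
  have hs : finSumFinEquiv.symm (⟨2 + (b : ℕ), by omega⟩ : Fin (2 + m)) = Sum.inr b := by
    rw [Equiv.symm_apply_eq]; exact h
  simp [ext2, Equiv.permCongr_apply, hs]
  apply Fin.ext; simp

end aux
section char
variable {m : ℕ}

set_option maxHeartbeats 1000000 in
lemma avoids_iff (σ : Equiv.Perm (Fin (2 + m))) :
    avoidsBar1243 σ ↔
      ((σ ⟨0, by omega⟩ : Fin (2 + m)) : ℕ) = 0 ∧ ((σ ⟨1, by omega⟩ : Fin (2 + m)) : ℕ) = 1 := by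
  constructor
  · intro h
    have h0 : ((σ ⟨0, by omega⟩ : Fin (2 + m)) : ℕ) = 0 := by
      by_contra h0
      have hσj : σ (σ.symm ⟨0, by omega⟩) = ⟨0, by omega⟩ := σ.apply_symm_apply _
      have hσjv : ((σ (σ.symm ⟨0, by omega⟩) : Fin (2 + m)) : ℕ) = 0 := by
        rw [hσj]
      have hjpos : 0 < ((σ.symm ⟨0, by omega⟩ : Fin (2 + m)) : ℕ) := by
        rcases Nat.eq_zero_or_pos ((σ.symm ⟨0, by omega⟩ : Fin (2 + m)) : ℕ) with he | hp
        · exfalso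
          have he' : σ.symm ⟨0, by omega⟩ = ⟨0, by omega⟩ := Fin.ext he
          rw [he'] at hσjv
          exact h0 hσjv
        · exact hp
      obtain ⟨k, l, _, hl, _, _⟩ := h ⟨0, by omega⟩ (σ.symm ⟨0, by omega⟩)
        (by simp only [Fin.lt_def, Fin.val_mk]; omega)
        (by simp only [Fin.lt_def]; omega)
      simp only [Fin.lt_def, Fin.val_mk] at hl
      omega
    refine ⟨h0, ?_⟩
    by_contra h1
    have hσj : σ (σ.symm ⟨1, by omega⟩) = ⟨1, by omega⟩ := σ.apply_symm_apply _
    have hσjv : ((σ (σ.symm ⟨1, by omega⟩) : Fin (2 + m)) : ℕ) = 1 := by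
      rw [hσj]
    have hjne0 : ((σ.symm ⟨1, by omega⟩ : Fin (2 + m)) : ℕ) ≠ 0 := by
      intro he
      have he' : σ.symm ⟨1, by omega⟩ = ⟨0, by omega⟩ := Fin.ext he
      rw [he'] at hσjv
      omega
    have hjne1 : ((σ.symm ⟨1, by omega⟩ : Fin (2 + m)) : ℕ) ≠ 1 := by
      intro he
      have he' : σ.symm ⟨1, by omega⟩ = ⟨1, by omega⟩ := Fin.ext he
      rw [he'] at hσjv
      exact h1 hσjv
    have hs1ne0 : ((σ ⟨1, by omega⟩ : Fin (2 + m)) : ℕ) ≠ 0 := by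
      intro he
      have he' : σ ⟨1, by omega⟩ = σ ⟨0, by omega⟩ := Fin.ext (by omega)
      have := congrArg Fin.val (σ.injective he')
      simp only [Fin.val_mk] at this
      omega
    obtain ⟨k, l, hkl, hl, _, _⟩ := h ⟨1, by omega⟩ (σ.symm ⟨1, by omega⟩)
      (by simp only [Fin.lt_def, Fin.val_mk]; omega)
      (by simp only [Fin.lt_def, Fin.val_mk]; omega)
    simp only [Fin.lt_def, Fin.val_mk] at hkl hl
    omega
  · rintro ⟨h0, h1⟩ i j hij hji
    simp only [Fin.lt_def] at hij hji
    have hj0 : ((σ j : Fin (2 + m)) : ℕ) ≠ 0 := by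
      intro he
      have he' : σ j = σ ⟨0, by omega⟩ := Fin.ext (by omega)
      have := congrArg Fin.val (σ.injective he')
      simp only [Fin.val_mk] at this
      omega
    have hj1 : ((σ j : Fin (2 + m)) : ℕ) ≠ 1 := by
      intro he
      have he' : σ j = σ ⟨1, by omega⟩ := Fin.ext (by omega)
      have hje := congrArg Fin.val (σ.injective he')
      simp only [Fin.val_mk] at hje
      have hie : i = ⟨0, by omega⟩ := Fin.ext (by simp only [Fin.val_mk]; omega)
      have hiv : ((σ i : Fin (2 + m)) : ℕ) = 0 := by rw [hie]; exact h0
      omega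
    have hival : 2 ≤ (i : ℕ) := by
      rcases Nat.lt_or_ge (i : ℕ) 2 with h2 | h2
      · exfalso
        rcases Nat.lt_or_ge (i : ℕ) 1 with h1' | h1'
        · have hie : i = ⟨0, by omega⟩ := Fin.ext (by simp only [Fin.val_mk]; omega)
          have hiv : ((σ i : Fin (2 + m)) : ℕ) = 0 := by rw [hie]; exact h0
          omega
        · have hie : i = ⟨1, by omega⟩ := Fin.ext (by simp only [Fin.val_mk]; omega)
          have hiv : ((σ i : Fin (2 + m)) : ℕ) = 1 := by rw [hie]; exact h1
          omega
      · exact h2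
    have hs0 : σ ⟨0, by omega⟩ = (⟨0, by omega⟩ : Fin (2 + m)) := Fin.ext h0
    have hs1 : σ ⟨1, by omega⟩ = (⟨1, by omega⟩ : Fin (2 + m)) := Fin.ext h1
    exact ⟨⟨0, by omega⟩, ⟨1, by omega⟩,
      by simp only [Fin.lt_def, Fin.val_mk]; omega,
      by simp only [Fin.lt_def, Fin.val_mk]; omega,
      by rw [hs0, hs1]; simp only [Fin.lt_def, Fin.val_mk]; omega,
      by rw [hs1]; simp only [Fin.lt_def, Fin.val_mk]; omega⟩

end char
section desext
variable {m : ℕ}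

lemma des_mem_ge (τ : Equiv.Perm (Fin m)) (a : Fin (2 + m))
    (ha : ∃ h : (a : ℕ) + 1 < 2 + m, ext2 τ ⟨(a : ℕ) + 1, h⟩ < ext2 τ a) :
    2 ≤ (a : ℕ) := by
  obtain ⟨h, hlt⟩ := ha
  rcases Nat.lt_or_ge (a : ℕ) 2 with h2 | h2
  · exfalso
    rcases Nat.lt_or_ge (a : ℕ) 1 with h1 | h1
    · have e1 : ext2 τ a = a := ext2_lt τ a (by omega)
      have e2 : ext2 τ ⟨(a : ℕ) + 1, h⟩ = ⟨(a : ℕ) + 1, h⟩ :=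
        ext2_lt τ _ (by simp only [Fin.val_mk]; omega)
      rw [e1, e2, Fin.lt_def] at hlt
      simp only [Fin.val_mk] at hlt
      omega
    · have hm : 0 < m := by omega
      have e1 : ext2 τ a = a := ext2_lt τ a (by omega)
      have hc : (⟨(a : ℕ) + 1, h⟩ : Fin (2 + m)) =
          ⟨2 + ((⟨0, hm⟩ : Fin m) : ℕ), by simp only [Fin.val_mk]; omega⟩ :=
        Fin.ext (by simp only [Fin.val_mk]; omega)
      rw [e1, hc, ext2_ge, Fin.lt_def] at hlt
      simp only [Fin.val_mk] at hlt
      omega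
  · exact h2

lemma P_iff (τ : Equiv.Perm (Fin m)) (b : Fin m) :
    (∃ h : (2 + (b : ℕ)) + 1 < 2 + m,
        ext2 τ ⟨(2 + (b : ℕ)) + 1, h⟩ < ext2 τ ⟨2 + (b : ℕ), by have := b.2; omega⟩) ↔
      (∃ h : (b : ℕ) + 1 < m, τ ⟨(b : ℕ) + 1, h⟩ < τ b) := by
  constructor
  · rintro ⟨h, hlt⟩
    have hb : (b : ℕ) + 1 < m := by omega
    refine ⟨hb, ?_⟩
    have e1 : (⟨(2 + (b : ℕ)) + 1, h⟩ : Fin (2 + m)) =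
        ⟨2 + ((⟨(b : ℕ) + 1, hb⟩ : Fin m) : ℕ), by simp only [Fin.val_mk]; omega⟩ :=
      Fin.ext (by simp only [Fin.val_mk]; omega)
    rw [e1, ext2_ge, ext2_ge, Fin.lt_def] at hlt
    simp only [Fin.val_mk] at hlt
    rw [Fin.lt_def]
    omega
  · rintro ⟨hb, hlt⟩
    have h : (2 + (b : ℕ)) + 1 < 2 + m := by omega
    refine ⟨h, ?_⟩
    have e1 : (⟨(2 + (b : ℕ)) + 1, h⟩ : Fin (2 + m)) =
        ⟨2 + ((⟨(b : ℕ) + 1, hb⟩ : Fin m) : ℕ), by simp only [Fin.val_mk]; omega⟩ :=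
      Fin.ext (by simp only [Fin.val_mk]; omega)
    rw [e1, ext2_ge, ext2_ge, Fin.lt_def]
    simp only [Fin.val_mk]
    rw [Fin.lt_def] at hlt
    omega

lemma des_ext2 (τ : Equiv.Perm (Fin m)) : des (ext2 τ) = des τ := by
  unfold des
  refine Finset.card_bij
    (fun a ha => (⟨(a : ℕ) - 2, by
      simp only [Finset.mem_filter, Finset.mem_univ, true_and] at ha
      have h2 := des_mem_ge τ a ha
      have := a.2
      omega⟩ : Fin m)) ?_ ?_ ?_
  · intro a ha
    simp only [Finset.mem_filter, Finset.mem_univ, true_and] at ha ⊢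
    have h2 := des_mem_ge τ a ha
    set b : Fin m := ⟨(a : ℕ) - 2, by have := a.2; omega⟩ with hbdef
    have hab : a = ⟨2 + (b : ℕ), by have := b.2; omega⟩ :=
      Fin.ext (by simp only [hbdef, Fin.val_mk]; omega)
    rw [hab] at ha
    simp only [Fin.val_mk] at ha
    exact (P_iff τ b).mp (by
      convert ha using 2 <;> omega)
  · intro a₁ ha₁ a₂ ha₂ he
    simp only [Finset.mem_filter, Finset.mem_univ, true_and] at ha₁ ha₂
    have h1 := des_mem_ge τ a₁ ha₁
    have h2 := des_mem_ge τ a₂ ha₂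
    have := congrArg Fin.val he
    simp only [Fin.val_mk] at this
    exact Fin.ext (by omega)
  · intro b hb
    simp only [Finset.mem_filter, Finset.mem_univ, true_and] at hb
    refine ⟨⟨2 + (b : ℕ), by have := b.2; omega⟩, ?_, ?_⟩
    · simp only [Finset.mem_filter, Finset.mem_univ, true_and, Fin.val_mk]
      exact (P_iff τ b).mpr hb
    · exact Fin.ext (by simp only [Fin.val_mk]; omega)

end desext
section main
variable {m : ℕ}

lemma ext2_avoids (τ : Equiv.Perm (Fin m)) : avoidsBar1243 (ext2 τ) := by
  rw [avoids_iff]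
  constructor
  · rw [ext2_lt τ _ (by simp only [Fin.val_mk]; omega)]
  · rw [ext2_lt τ _ (by simp only [Fin.val_mk]; omega)]

lemma ext2_inj : Function.Injective (ext2 (m := m)) := by
  intro τ₁ τ₂ he
  ext b
  have := congrArg (fun σ : Equiv.Perm (Fin (2 + m)) =>
    ((σ ⟨2 + (b : ℕ), by have := b.2; omega⟩ : Fin (2 + m)) : ℕ)) he
  simp only [ext2_ge, Fin.val_mk] at this
  omega

set_option maxHeartbeats 1000000 in
lemma ext2_surj (σ : Equiv.Perm (Fin (2 + m))) (hσ : avoidsBar1243 σ) :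
    ∃ τ : Equiv.Perm (Fin m), ext2 τ = σ := by
  rw [avoids_iff] at hσ
  obtain ⟨h0, h1⟩ := hσ
  have hge : ∀ b : Fin m, 2 ≤ ((σ ⟨2 + (b : ℕ), by have := b.2; omega⟩ : Fin (2 + m)) : ℕ) := by
    intro b
    have hne0 : σ ⟨2 + (b : ℕ), by have := b.2; omega⟩ ≠ σ ⟨0, by omega⟩ := by
      intro he
      have := congrArg Fin.val (σ.injective he)
      simp only [Fin.val_mk] at this
      omega
    have hne1 : σ ⟨2 + (b : ℕ), by have := b.2; omega⟩ ≠ σ ⟨1, by omega⟩ := by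
      intro he
      have := congrArg Fin.val (σ.injective he)
      simp only [Fin.val_mk] at this
      omega
    have v0 : ((σ ⟨2 + (b : ℕ), by have := b.2; omega⟩ : Fin (2 + m)) : ℕ) ≠ 0 := by
      intro he
      exact hne0 (Fin.ext (by rw [h0]; exact he))
    have v1 : ((σ ⟨2 + (b : ℕ), by have := b.2; omega⟩ : Fin (2 + m)) : ℕ) ≠ 1 := by
      intro he
      exact hne1 (Fin.ext (by rw [h1]; exact he))
    omega
  set f : Fin m → Fin m := fun b =>
    ⟨((σ ⟨2 + (b : ℕ), by have := b.2; omega⟩ : Fin (2 + m)) : ℕ) - 2, by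
      have h2 := hge b
      have := (σ ⟨2 + (b : ℕ), by have := b.2; omega⟩ : Fin (2 + m)).2
      omega⟩ with hf
  have finj : Function.Injective f := by
    intro b₁ b₂ he
    have hev := congrArg Fin.val he
    simp only [hf, Fin.val_mk] at hev
    have g1 := hge b₁
    have g2 := hge b₂
    have : σ ⟨2 + (b₁ : ℕ), by have := b₁.2; omega⟩ =
        σ ⟨2 + (b₂ : ℕ), by have := b₂.2; omega⟩ := Fin.ext (by omega)
    have := congrArg Fin.val (σ.injective this)
    simp only [Fin.val_mk] at this
    exact Fin.ext (by omega)
  refine ⟨Equiv.ofBijective f (Finite.injective_iff_bijective.mp finj), ?_⟩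
  ext i
  rcases Nat.lt_or_ge (i : ℕ) 2 with h2 | h2
  · rw [ext2_lt _ _ h2]
    rcases Nat.lt_or_ge (i : ℕ) 1 with h1' | h1'
    · have hie : i = ⟨0, by omega⟩ := Fin.ext (by simp only [Fin.val_mk]; omega)
      rw [hie]
      symm
      simp only [Fin.val_mk]
      exact h0
    · have hie : i = ⟨1, by omega⟩ := Fin.ext (by simp only [Fin.val_mk]; omega)
      rw [hie]
      symm
      simp only [Fin.val_mk]
      exact h1
  · have hb2 : (i : ℕ) - 2 < m := by have := i.2; omega
    have hie : i = ⟨2 + ((⟨(i : ℕ) - 2, hb2⟩ : Fin m) : ℕ), by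
        simp only [Fin.val_mk]; have := i.2; omega⟩ :=
      Fin.ext (by simp only [Fin.val_mk]; omega)
    rw [hie, ext2_ge]
    simp only [Equiv.ofBijective_apply, hf, Fin.val_mk]
    have := hge ⟨(i : ℕ) - 2, hb2⟩
    simp only [Fin.val_mk] at this
    omega

end main

/-- The descent generating function over `Av_n(bar1 bar2 4 3)` is the Eulerian polynomial
`A_{n-2}(q)`. -/
theorem desPoly_avoidsBar1243_eq_eulerian (n : ℕ) (hn : 2 ≤ n) :
    ∑ σ ∈ Finset.univ.filter (fun σ : Equiv.Perm (Fin n) => avoidsBar1243 σ),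
        (X : Polynomial ℤ) ^ des σ =
      ∑ τ : Equiv.Perm (Fin (n - 2)), (X : Polynomial ℤ) ^ des τ := by
  obtain ⟨m, rfl⟩ : ∃ m, n = 2 + m := ⟨n - 2, by omega⟩
  have hm : 2 + m - 2 = m := by omega
  have hred : ∀ k (h : k = m), (∑ τ : Equiv.Perm (Fin k), (X : Polynomial ℤ) ^ des τ) =
      ∑ τ : Equiv.Perm (Fin m), (X : Polynomial ℤ) ^ des τ := by
    rintro k rfl; rfl
  rw [hred _ hm]
  symm
  refine Finset.sum_bij (fun τ _ => ext2 τ) ?_ ?_ ?_ ?_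
  · intro τ _
    simp only [Finset.mem_filter, Finset.mem_univ, true_and]
    exact ext2_avoids τ
  · intro τ₁ _ τ₂ _ h
    exact ext2_inj h
  · intro σ hσ
    simp only [Finset.mem_filter, Finset.mem_univ, true_and] at hσ
    obtain ⟨τ, hτ⟩ := ext2_surj σ hσ
    exact ⟨τ, Finset.mem_univ τ, hτ⟩
  · intro τ _
    rw [des_ext2]
end

section
/- For n ≥ 2, the descent generating function over permutations of {1,...,n} avoiding the barred pattern bar132bar4 equals the Eulerian polynomial A_{n-2}(q). -/
open Polynomial

def avoidsBar1324 {n : ℕ} (σ : Equiv.Perm (Fin n)) : Prop :=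
  ∀ i j : Fin n, i < j → σ j < σ i →
    ∃ k l : Fin n, k < i ∧ j < l ∧ σ k < σ j ∧ σ i < σ l

instance {n : ℕ} : DecidablePred (avoidsBar1324 (n := n)) := fun σ => by
  unfold avoidsBar1324; apply Fintype.decidableForallFintype

section Aux

variable {m : ℕ}

lemma mid_bounds (σ : Equiv.Perm (Fin (m+2)))
    (h0 : σ 0 = 0) (h1 : σ ⟨m+1, by omega⟩ = ⟨m+1, by omega⟩)
    {j : Fin (m+2)} (hj0 : (j : ℕ) ≠ 0) (hj1 : (j : ℕ) ≠ m+1) :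
    1 ≤ (σ j : ℕ) ∧ (σ j : ℕ) ≤ m := by
  have hlt := (σ j).isLt
  constructor
  · rcases Nat.eq_zero_or_pos (σ j : ℕ) with h | h
    · exfalso
      have : σ j = σ 0 := by rw [h0]; exact Fin.ext (by simpa using h)
      have := σ.injective this
      apply hj0
      rw [this]; simp
    · omega
  · rcases eq_or_ne (σ j : ℕ) (m+1) with h | h
    · exfalso
      have : σ j = σ ⟨m+1, by omega⟩ := by rw [h1]; exact Fin.ext (by simpa using h)
      have := σ.injective this
      apply hj1
      rw [this]
    · omega

def shrink (σ : Equiv.Perm (Fin (m+2)))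
    (h0 : σ 0 = 0) (h1 : σ ⟨m+1, by omega⟩ = ⟨m+1, by omega⟩) :
    Equiv.Perm (Fin m) where
  toFun i := ⟨(σ ⟨(i : ℕ)+1, by omega⟩ : ℕ) - 1, by
    have := mid_bounds σ h0 h1 (j := ⟨(i : ℕ)+1, by omega⟩) (by simp) (by simp; omega)
    omega⟩
  invFun i := ⟨(σ⁻¹ ⟨(i : ℕ)+1, by omega⟩ : ℕ) - 1, by
    have h0' : σ⁻¹ 0 = 0 := by
      apply σ.injective; rw [Equiv.Perm.coe_inv, Equiv.apply_symm_apply, h0]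
    have h1' : σ⁻¹ ⟨m+1, by omega⟩ = ⟨m+1, by omega⟩ := by
      apply σ.injective; rw [Equiv.Perm.coe_inv, Equiv.apply_symm_apply, h1]
    have := mid_bounds σ⁻¹ h0' h1' (j := ⟨(i : ℕ)+1, by omega⟩) (by simp) (by simp; omega)
    omega⟩
  left_inv i := by
    have hb := mid_bounds σ h0 h1 (j := ⟨(i : ℕ)+1, by omega⟩) (by simp) (by simp; omega)
    have key : (⟨(σ ⟨(i : ℕ)+1, by omega⟩ : ℕ) - 1 + 1, by omega⟩ : Fin (m+2))
        = σ ⟨(i : ℕ)+1, by omega⟩ := Fin.ext (by simp; omega)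
    apply Fin.ext
    simp only [key, Equiv.Perm.coe_inv, Equiv.symm_apply_apply]
    omega
  right_inv i := by
    have h0' : σ⁻¹ 0 = 0 := by
      apply σ.injective; rw [Equiv.Perm.coe_inv, Equiv.apply_symm_apply, h0]
    have h1' : σ⁻¹ ⟨m+1, by omega⟩ = ⟨m+1, by omega⟩ := by
      apply σ.injective; rw [Equiv.Perm.coe_inv, Equiv.apply_symm_apply, h1]
    have hb := mid_bounds σ⁻¹ h0' h1' (j := ⟨(i : ℕ)+1, by omega⟩) (by simp) (by simp; omega)
    have key : (⟨(σ⁻¹ ⟨(i : ℕ)+1, by omega⟩ : ℕ) - 1 + 1, by omega⟩ : Fin (m+2))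
        = σ⁻¹ ⟨(i : ℕ)+1, by omega⟩ := Fin.ext (by show (σ⁻¹ ⟨(i : ℕ)+1, by omega⟩ : ℕ) - 1 + 1 = _; omega)
    apply Fin.ext
    simp only [key]; simp only [Equiv.Perm.coe_inv, Equiv.apply_symm_apply]
    omega

def growFun (τ : Equiv.Perm (Fin m)) (j : Fin (m+2)) : Fin (m+2) :=
  if hj : (j : ℕ) = 0 then 0
  else if hj' : (j : ℕ) = m+1 then ⟨m+1, by omega⟩
  else ⟨(τ ⟨(j : ℕ) - 1, by omega⟩ : ℕ) + 1, by have := (τ ⟨(j : ℕ) - 1, by omega⟩).isLt; omega⟩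

lemma growFun_inv (τ : Equiv.Perm (Fin m)) (j : Fin (m+2)) :
    growFun τ⁻¹ (growFun τ j) = j := by
  rcases eq_or_ne (j : ℕ) 0 with hj | hj
  · have e1 : growFun τ j = 0 := by rw [growFun, dif_pos hj]
    have hz : ((0 : Fin (m+2)) : ℕ) = 0 := rfl
    rw [e1, growFun, dif_pos hz]
    exact Fin.ext (hz.trans hj.symm)
  rcases eq_or_ne (j : ℕ) (m+1) with hj' | hj'
  · have e1 : growFun τ j = ⟨m+1, by omega⟩ := by rw [growFun, dif_neg hj, dif_pos hj']
    have hz : ((⟨m+1, by omega⟩ : Fin (m+2)) : ℕ) = m+1 := rfl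
    rw [e1, growFun, dif_neg (show ¬ ((⟨m+1, by omega⟩ : Fin (m+2)) : ℕ) = 0 by rw [hz]; omega),
      dif_pos hz]
    exact Fin.ext (hz.trans hj'.symm)
  · have e1 : growFun τ j = ⟨(τ ⟨(j : ℕ) - 1, by omega⟩ : ℕ) + 1,
        by have := (τ ⟨(j : ℕ) - 1, by omega⟩).isLt; omega⟩ := by
      rw [growFun, dif_neg hj, dif_neg hj']
    have hτ := (τ ⟨(j : ℕ) - 1, by omega⟩).isLt
    have hv : ((⟨(τ ⟨(j : ℕ) - 1, by omega⟩ : ℕ) + 1, by omega⟩ : Fin (m+2)) : ℕ)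
        = (τ ⟨(j : ℕ) - 1, by omega⟩ : ℕ) + 1 := rfl
    have hc1 : ¬ ((⟨(τ ⟨(j : ℕ) - 1, by omega⟩ : ℕ) + 1, by omega⟩ : Fin (m+2)) : ℕ) = 0 := by
      rw [hv]; omega
    have hc2 : ¬ ((⟨(τ ⟨(j : ℕ) - 1, by omega⟩ : ℕ) + 1, by omega⟩ : Fin (m+2)) : ℕ) = m+1 := by
      rw [hv]; omega
    rw [e1, growFun, dif_neg hc1, dif_neg hc2]
    have e2 : (⟨((⟨(τ ⟨(j : ℕ) - 1, by omega⟩ : ℕ) + 1, by omega⟩ : Fin (m+2)) : ℕ) - 1,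
        by rw [hv]; omega⟩ : Fin m) = τ ⟨(j : ℕ) - 1, by omega⟩ :=
      Fin.ext (show (τ ⟨(j : ℕ) - 1, by omega⟩ : ℕ) + 1 - 1 = _ by omega)
    simp only [e2, Equiv.Perm.coe_inv, Equiv.symm_apply_apply]
    exact Fin.ext (show (j : ℕ) - 1 + 1 = (j : ℕ) by omega)

def grow (τ : Equiv.Perm (Fin m)) : Equiv.Perm (Fin (m+2)) where
  toFun := growFun τ
  invFun := growFun τ⁻¹
  left_inv := growFun_inv τ
  right_inv j := by have := growFun_inv τ⁻¹ j; rwa [inv_inv] at this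

lemma grow_apply (τ : Equiv.Perm (Fin m)) (j : Fin (m+2)) : grow τ j = growFun τ j := rfl

lemma grow_zero (τ : Equiv.Perm (Fin m)) : grow τ 0 = 0 := by
  rw [grow_apply, growFun, dif_pos (by simp)]

lemma grow_last (τ : Equiv.Perm (Fin m)) : grow τ ⟨m+1, by omega⟩ = ⟨m+1, by omega⟩ := by
  rw [grow_apply, growFun, dif_neg (by simp), dif_pos rfl]

lemma grow_mid (τ : Equiv.Perm (Fin m)) (j : Fin (m+2)) (hj : (j : ℕ) ≠ 0) (hj' : (j : ℕ) ≠ m+1) :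
    grow τ j = ⟨(τ ⟨(j : ℕ) - 1, by omega⟩ : ℕ) + 1,
      by have := (τ ⟨(j : ℕ) - 1, by omega⟩).isLt; omega⟩ := by
  rw [grow_apply, growFun, dif_neg hj, dif_neg hj']

lemma avoid_iff (σ : Equiv.Perm (Fin (m+2))) :
    avoidsBar1324 σ ↔ σ 0 = 0 ∧ σ ⟨m+1, by omega⟩ = ⟨m+1, by omega⟩ := by
  constructor
  · intro hav
    constructor
    · by_contra h0
      set j := σ⁻¹ 0 with hj
      have hj0 : j ≠ 0 := by
        intro h
        apply h0
        have := congrArg σ h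
        rw [hj, Equiv.Perm.coe_inv, Equiv.apply_symm_apply] at this
        exact this.symm
      have h1 : (0 : Fin (m+2)) < j := by
        rw [Fin.lt_def]
        simp only [Fin.val_zero]
        have : (j : ℕ) ≠ 0 := fun hc => hj0 (Fin.ext (by simp [hc]))
        omega
      have h2 : σ j < σ 0 := by
        rw [hj, Equiv.Perm.coe_inv, σ.apply_symm_apply]
        rw [Fin.lt_def]
        have : (σ 0 : ℕ) ≠ 0 := fun hc => h0 (Fin.ext (by simp [hc]))
        simp only [Fin.val_zero]
        omega
      obtain ⟨k, l, hk, _, _, _⟩ := hav 0 j h1 h2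
      exact absurd hk (Fin.not_lt_zero _)
    · by_contra h1
      set i := σ⁻¹ ⟨m+1, by omega⟩ with hi
      have hil : i ≠ ⟨m+1, by omega⟩ := by
        intro h
        apply h1
        have := congrArg σ h
        rw [hi, Equiv.Perm.coe_inv, Equiv.apply_symm_apply] at this
        exact this.symm
      have hlt : i < ⟨m+1, by omega⟩ := by
        rw [Fin.lt_def]
        have := i.isLt
        have : (i : ℕ) ≠ m+1 := fun h => hil (Fin.ext h)
        simp only
        omega
      have h2 : σ ⟨m+1, by omega⟩ < σ i := by
        rw [hi, Equiv.Perm.coe_inv, σ.apply_symm_apply, Fin.lt_def]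
        have h3 := (σ ⟨m+1, by omega⟩).isLt
        have : (σ ⟨m+1, by omega⟩ : ℕ) ≠ m+1 := fun h => h1 (Fin.ext h)
        simp only
        omega
      obtain ⟨k, l, _, hl, _, _⟩ := hav i ⟨m+1, by omega⟩ hlt h2
      rw [Fin.lt_def] at hl
      have := l.isLt
      simp only at hl
      omega
  · rintro ⟨h0, h1⟩ i j hij hσ
    refine ⟨0, ⟨m+1, by omega⟩, ?_, ?_, ?_, ?_⟩
    · rw [Fin.lt_def]
      simp only [Fin.val_zero]
      have : (i : ℕ) ≠ 0 := by
        intro h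
        have : i = 0 := Fin.ext (by simpa using h)
        rw [this, h0, Fin.lt_def] at hσ
        simp at hσ
      omega
    · rw [Fin.lt_def]
      simp only
      have hj := j.isLt
      have : (j : ℕ) ≠ m+1 := by
        intro h
        have : j = ⟨m+1, by omega⟩ := Fin.ext h
        rw [this, h1, Fin.lt_def] at hσ
        have := (σ i).isLt
        simp only at hσ
        omega
      omega
    · rw [h0, Fin.lt_def]
      simp only [Fin.val_zero]
      have : σ j ≠ 0 := by
        intro h
        have : j = 0 := by
          have := σ.injective (h.trans h0.symm)
          exact this
        rw [this] at hij
        exact absurd hij (Fin.not_lt_zero _)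
      have : (σ j : ℕ) ≠ 0 := fun hc => this (Fin.ext (by simp [hc]))
      omega
    · rw [h1, Fin.lt_def]
      simp only
      have hi := (σ i).isLt
      have : σ i ≠ ⟨m+1, by omega⟩ := by
        intro h
        have : i = ⟨m+1, by omega⟩ := σ.injective (h.trans h1.symm)
        rw [this, Fin.lt_def] at hij
        have := j.isLt
        simp only at hij
        omega
      have : (σ i : ℕ) ≠ m+1 := fun h => this (Fin.ext h)
      omega

lemma descent_ne (σ : Equiv.Perm (Fin (m+2))) (h0 : σ 0 = 0)
    (h1 : σ ⟨m+1, by omega⟩ = ⟨m+1, by omega⟩) {a : Fin (m+2)}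
    (h : (a : ℕ) + 1 < m + 2) (hlt : σ ⟨(a : ℕ)+1, h⟩ < σ a) :
    1 ≤ (a : ℕ) ∧ (a : ℕ) < m := by
  constructor
  · rcases Nat.eq_zero_or_pos (a : ℕ) with h' | h'
    · exfalso
      have ha : σ a = 0 := by
        have : a = 0 := Fin.ext (by simp [h'])
        rw [this, h0]
      rw [ha] at hlt
      exact absurd hlt (Fin.not_lt_zero _)
    · omega
  · have halt := a.isLt
    rcases eq_or_ne (a : ℕ) m with h' | h'
    · exfalso
      have ha : σ ⟨(a : ℕ)+1, h⟩ = ⟨m+1, by omega⟩ := by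
        have : (⟨(a : ℕ)+1, h⟩ : Fin (m+2)) = ⟨m+1, by omega⟩ := Fin.ext (by simp [h'])
        rw [this, h1]
      rw [ha, Fin.lt_def] at hlt
      have := (σ a).isLt
      simp only at hlt
      omega
    · omega

lemma shrink_val (σ : Equiv.Perm (Fin (m+2))) (h0 : σ 0 = 0)
    (h1 : σ ⟨m+1, by omega⟩ = ⟨m+1, by omega⟩) (i : Fin m) :
    ((shrink σ h0 h1) i : ℕ) = (σ ⟨(i : ℕ)+1, by omega⟩ : ℕ) - 1 := rfl

lemma shrink_val' (σ : Equiv.Perm (Fin (m+2))) (h0 : σ 0 = 0)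
    (h1 : σ ⟨m+1, by omega⟩ = ⟨m+1, by omega⟩) (x : Fin m) (y : Fin (m+2))
    (hy : (y : ℕ) = (x : ℕ) + 1) :
    ((shrink σ h0 h1) x : ℕ) = (σ y : ℕ) - 1 := by
  have e : (⟨(x : ℕ)+1, by omega⟩ : Fin (m+2)) = y :=
    Fin.ext (show (x : ℕ) + 1 = (y : ℕ) by omega)
  rw [shrink_val, e]

lemma shrink_lt_iff (σ : Equiv.Perm (Fin (m+2))) (h0 : σ 0 = 0)
    (h1 : σ ⟨m+1, by omega⟩ = ⟨m+1, by omega⟩) (x y : Fin m) (x' y' : Fin (m+2))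
    (hx : (x' : ℕ) = (x : ℕ) + 1) (hy : (y' : ℕ) = (y : ℕ) + 1) :
    ((shrink σ h0 h1) x < (shrink σ h0 h1) y ↔ σ x' < σ y') := by
  have hxm := x.isLt
  have hym := y.isLt
  have hb1 := mid_bounds σ h0 h1 (j := x') (by omega) (by omega)
  have hb2 := mid_bounds σ h0 h1 (j := y') (by omega) (by omega)
  rw [Fin.lt_def, Fin.lt_def, shrink_val' σ h0 h1 x x' hx, shrink_val' σ h0 h1 y y' hy]
  omega

lemma des_shrink (σ : Equiv.Perm (Fin (m+2)))
    (h0 : σ 0 = 0) (h1 : σ ⟨m+1, by omega⟩ = ⟨m+1, by omega⟩) :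
    des σ = des (shrink σ h0 h1) := by
  unfold des
  refine Finset.card_bij' (fun a ha => ⟨(a : ℕ) - 1, by
      simp only [Finset.mem_filter, Finset.mem_univ, true_and] at ha
      obtain ⟨h, hlt⟩ := ha
      have := descent_ne σ h0 h1 h hlt
      omega⟩)
    (fun b hb => ⟨(b : ℕ) + 1, by have := b.isLt; omega⟩) ?_ ?_ ?_ ?_
  · intro a ha
    simp only [Finset.mem_filter, Finset.mem_univ, true_and] at ha ⊢
    obtain ⟨h, hlt⟩ := ha
    have hb := descent_ne σ h0 h1 h hlt
    rw [Fin.lt_def] at hlt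
    refine ⟨show (a : ℕ) - 1 + 1 < m by omega,
      (shrink_lt_iff σ h0 h1 _ _ (⟨(a : ℕ)+1, h⟩ : Fin (m+2)) a ?_ ?_).mpr ?_⟩
    · show (a : ℕ) + 1 = ((a : ℕ) - 1 + 1) + 1
      omega
    · show (a : ℕ) = ((a : ℕ) - 1) + 1
      omega
    · rw [Fin.lt_def]
      exact hlt
  · intro b hb
    simp only [Finset.mem_filter, Finset.mem_univ, true_and] at hb ⊢
    obtain ⟨h, hlt⟩ := hb
    have hbl := b.isLt
    refine ⟨show (b : ℕ) + 1 + 1 < m + 2 by omega, ?_⟩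
    refine (shrink_lt_iff σ h0 h1 _ _ _ _ ?_ ?_).mp hlt
    · show (b : ℕ) + 1 + 1 = ((b : ℕ) + 1) + 1
      omega
    · show (b : ℕ) + 1 = (b : ℕ) + 1
      rfl
  · intro a ha
    simp only [Finset.mem_filter, Finset.mem_univ, true_and] at ha
    obtain ⟨h, hlt⟩ := ha
    have := descent_ne σ h0 h1 h hlt
    exact Fin.ext (by show (a : ℕ) - 1 + 1 = (a : ℕ); omega)
  · intro b hb
    exact Fin.ext (by show (b : ℕ) + 1 - 1 = (b : ℕ); omega)

lemma grow_shrink (σ : Equiv.Perm (Fin (m+2)))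
    (h0 : σ 0 = 0) (h1 : σ ⟨m+1, by omega⟩ = ⟨m+1, by omega⟩) :
    grow (shrink σ h0 h1) = σ := by
  apply Equiv.ext; intro x
  rcases eq_or_ne (x : ℕ) 0 with hx | hx
  · have : x = 0 := Fin.ext (by simp [hx])
    rw [this, grow_zero, h0]
  rcases eq_or_ne (x : ℕ) (m+1) with hx' | hx'
  · have : x = ⟨m+1, by omega⟩ := Fin.ext hx'
    rw [this, grow_last, h1]
  · rw [grow_mid _ x hx hx']
    have hxl := x.isLt
    have hb := mid_bounds σ h0 h1 (j := x) hx hx'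
    apply Fin.ext
    show ((shrink σ h0 h1) ⟨(x : ℕ) - 1, by omega⟩ : ℕ) + 1 = (σ x : ℕ)
    rw [shrink_val' σ h0 h1 (⟨(x : ℕ) - 1, by omega⟩ : Fin m) x
      (by show (x : ℕ) = (x : ℕ) - 1 + 1; omega)]
    omega

lemma shrink_grow (τ : Equiv.Perm (Fin m))
    (h0 : grow τ 0 = 0) (h1 : grow τ ⟨m+1, by omega⟩ = ⟨m+1, by omega⟩) :
    shrink (grow τ) h0 h1 = τ := by
  apply Equiv.ext; intro i
  have hil := i.isLt
  apply Fin.ext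
  rw [shrink_val' (grow τ) h0 h1 i (⟨(i : ℕ)+1, by omega⟩ : Fin (m+2)) (by show (i:ℕ)+1 = (i:ℕ)+1; rfl)]
  have hc1 : ((⟨(i : ℕ)+1, by omega⟩ : Fin (m+2)) : ℕ) ≠ 0 := by
    show (i : ℕ) + 1 ≠ 0; omega
  have hc2 : ((⟨(i : ℕ)+1, by omega⟩ : Fin (m+2)) : ℕ) ≠ m+1 := by
    show (i : ℕ) + 1 ≠ m+1; omega
  rw [grow_mid τ (⟨(i : ℕ)+1, by omega⟩ : Fin (m+2)) hc1 hc2]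
  have e : (⟨((⟨(i : ℕ)+1, by omega⟩ : Fin (m+2)) : ℕ) - 1, by omega⟩ : Fin m) = i :=
    Fin.ext (by show (i : ℕ) + 1 - 1 = (i : ℕ); omega)
  simp only [e]
  show (τ i : ℕ) + 1 - 1 = (τ i : ℕ)
  omega

end Aux

/-- The descent generating function over `Av_n(bar1 3 2 bar4)` is the Eulerian polynomial
`A_{n-2}(q)`. -/
theorem desPoly_avoidsBar1324_eq_eulerian (n : ℕ) (hn : 2 ≤ n) :
    ∑ σ ∈ Finset.univ.filter (fun σ : Equiv.Perm (Fin n) => avoidsBar1324 σ),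
        (X : Polynomial ℤ) ^ des σ =
      ∑ τ : Equiv.Perm (Fin (n - 2)), (X : Polynomial ℤ) ^ des τ := by
  obtain ⟨m, rfl⟩ : ∃ m, n = m + 2 := ⟨n - 2, by omega⟩
  show _ = ∑ τ : Equiv.Perm (Fin m), (X : Polynomial ℤ) ^ des τ
  refine Finset.sum_bij' (fun σ hσ => shrink σ
      ((avoid_iff σ).mp (by simpa using hσ)).1 ((avoid_iff σ).mp (by simpa using hσ)).2)
    (fun τ _ => grow τ) ?_ ?_ ?_ ?_ ?_
  · intro a ha; exact Finset.mem_univ _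
  · intro τ _
    simp only [Finset.mem_filter, Finset.mem_univ, true_and]
    rw [avoid_iff]
    exact ⟨grow_zero τ, grow_last τ⟩
  · intro σ hσ
    exact grow_shrink σ _ _
  · intro τ hτ
    exact shrink_grow τ _ _
  · intro σ hσ
    exact congrArg (fun k => (X : Polynomial ℤ) ^ k)
      (des_shrink σ ((avoid_iff σ).mp (by simpa using hσ)).1
        ((avoid_iff σ).mp (by simpa using hσ)).2)
end

section
/- The barred patterns bar1bar243 and bar132bar4 are des-Wilf equivalent: for all n, ∑_{σ ∈ Av_n(bar1bar243)} q^{des σ} = ∑_{σ ∈ Av_n(bar132bar4)} q^{des σ}. -/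
open Polynomial

/- ### Auxiliary lemmas -/

section Aux

variable {m : ℕ}

lemma fin_last_add_one : (Fin.last (m+1)) + 1 = 0 := by
  apply Fin.ext
  simp [Fin.add_def]

lemma fin_zero_sub_one : (0 : Fin (m+2)) - 1 = Fin.last (m+1) := by
  rw [← fin_last_add_one]; abel

lemma fin_sub_one_lt_sub_one {a b : Fin (m+2)} (ha : a ≠ 0) (hb : b ≠ 0) :
    a - 1 < b - 1 ↔ a < b := by
  have ha' := Fin.coe_sub_one a
  have hb' := Fin.coe_sub_one b
  rw [if_neg ha] at ha'
  rw [if_neg hb] at hb'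
  have ha0 : (a : ℕ) ≠ 0 := fun h => ha (Fin.ext h)
  have hb0 : (b : ℕ) ≠ 0 := fun h => hb (Fin.ext h)
  rw [Fin.lt_def, Fin.lt_def, ha', hb']
  omega

/-- Characterization of `avoidsBar1243` for `n ≥ 2`. -/
lemma bar1243_iff (σ : Equiv.Perm (Fin (m+2))) :
    avoidsBar1243 σ ↔ σ 0 = 0 ∧ σ 1 = 1 := by
  constructor
  · intro h
    have h0 : σ 0 = 0 := by
      by_contra h0
      have hne : σ.symm 0 ≠ 0 := by
        intro he
        have h' := congrArg σ he
        rw [Equiv.apply_symm_apply] at h'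
        exact h0 h'.symm
      have hlt : (0 : Fin (m+2)) < σ.symm 0 := Fin.pos_of_ne_zero hne
      have hv : σ (σ.symm 0) < σ 0 := by
        rw [Equiv.apply_symm_apply]
        exact Fin.pos_of_ne_zero h0
      obtain ⟨k, l, _, hl0, _, _⟩ := h 0 (σ.symm 0) hlt hv
      exact absurd hl0 (Fin.not_lt_zero l)
    refine ⟨h0, ?_⟩
    by_contra h1
    set j := σ.symm 1 with hj
    have hσj : σ j = 1 := Equiv.apply_symm_apply σ 1
    have hj0 : j ≠ 0 := by
      intro he; rw [he, h0] at hσj; exact one_ne_zero hσj.symm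
    have hj1 : j ≠ 1 := by
      intro he; rw [he] at hσj; exact h1 hσj
    have hjlt : (1 : Fin (m+2)) < j := by
      rw [Fin.lt_def]
      have := Fin.ext_iff.not.mp hj0
      have := Fin.ext_iff.not.mp hj1
      simp only [Fin.val_zero, Fin.val_one] at *
      omega
    have hσ1 : σ j < σ 1 := by
      have hn0 : σ 1 ≠ 0 := by
        intro he; rw [← h0] at he
        exact one_ne_zero (σ.injective he)
      rw [Fin.lt_def, hσj]
      have h1' := Fin.ext_iff.not.mp h1
      have h0' := Fin.ext_iff.not.mp hn0
      simp only [Fin.val_zero, Fin.val_one] at *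
      omega
    obtain ⟨k, l, hkl, hl1, _, _⟩ := h 1 j hjlt hσ1
    rw [Fin.lt_def] at hkl hl1
    simp only [Fin.val_one] at hl1
    omega
  · rintro ⟨h0, h1⟩ i j hij hji
    have hj0 : σ j ≠ 0 := by
      intro he; rw [← h0] at he
      have := σ.injective he
      rw [this] at hij
      exact Fin.not_lt_zero i hij
    have hj1 : σ j ≠ 1 := by
      intro he; rw [← h1] at he
      have hje := σ.injective he
      rw [hje] at hij hji
      rw [Fin.lt_def, Fin.val_one] at hij
      have : i = 0 := by
        apply Fin.ext; simpa using Nat.lt_one_iff.mp hij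
      rw [this, h0, h1] at hji
      exact absurd hji (by simp [Fin.lt_def])
    have hi2 : 1 < i := by
      have hi0 : i ≠ 0 := by
        intro he; rw [he, h0] at hji
        exact Fin.not_lt_zero _ hji
      have hi1 : i ≠ 1 := by
        intro he
        rw [he, h1, Fin.lt_def, Fin.val_one] at hji
        exact hj0 (Fin.ext (by simpa using Nat.lt_one_iff.mp hji))
      rw [Fin.lt_def]
      have := Fin.ext_iff.not.mp hi0
      have := Fin.ext_iff.not.mp hi1
      simp only [Fin.val_zero, Fin.val_one] at *
      omega
    refine ⟨0, 1, ?_, hi2, ?_, ?_⟩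
    · rw [Fin.lt_def]; simp
    · rw [h0, h1, Fin.lt_def]; simp
    · rw [h1, Fin.lt_def, Fin.val_one]
      have := Fin.ext_iff.not.mp hj0
      have := Fin.ext_iff.not.mp hj1
      simp only [Fin.val_zero, Fin.val_one] at *
      omega

/-- Characterization of `avoidsBar1324` for `n ≥ 2`. -/
lemma bar1324_iff (σ : Equiv.Perm (Fin (m+2))) :
    avoidsBar1324 σ ↔ σ 0 = 0 ∧ σ (Fin.last (m+1)) = Fin.last (m+1) := by
  constructor
  · intro h
    have h0 : σ 0 = 0 := by
      by_contra h0
      have hne : σ.symm 0 ≠ 0 := by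
        intro he
        have h' := congrArg σ he
        rw [Equiv.apply_symm_apply] at h'
        exact h0 h'.symm
      have hlt : (0 : Fin (m+2)) < σ.symm 0 := Fin.pos_of_ne_zero hne
      have hv : σ (σ.symm 0) < σ 0 := by
        rw [Equiv.apply_symm_apply]
        exact Fin.pos_of_ne_zero h0
      obtain ⟨k, l, hk0, _, _, _⟩ := h 0 (σ.symm 0) hlt hv
      exact absurd hk0 (Fin.not_lt_zero k)
    refine ⟨h0, ?_⟩
    by_contra hL
    set p := σ.symm (Fin.last (m+1)) with hp
    have hσp : σ p = Fin.last (m+1) := Equiv.apply_symm_apply σ _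
    have hpne : p ≠ Fin.last (m+1) := by
      intro he; rw [he] at hσp; exact hL hσp
    have hplt : p < Fin.last (m+1) :=
      lt_of_le_of_ne (Fin.le_last p) hpne
    have hv : σ (Fin.last (m+1)) < σ p := by
      rw [hσp]
      exact lt_of_le_of_ne (Fin.le_last _) hL
    obtain ⟨k, l, _, hll, _, _⟩ := h p (Fin.last (m+1)) hplt hv
    exact absurd hll (by simpa using Fin.le_last l)
  · rintro ⟨h0, hL⟩ i j hij hji
    have hi0 : i ≠ 0 := by
      intro he; rw [he, h0] at hji
      exact Fin.not_lt_zero _ hji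
    have hjL : j ≠ Fin.last (m+1) := by
      intro he; rw [he, hL] at hji
      exact absurd (hji.trans_le (Fin.le_last _)) (lt_irrefl _)
    have hσj0 : σ j ≠ 0 := by
      intro he; rw [← h0] at he
      have := σ.injective he
      rw [this] at hij
      exact Fin.not_lt_zero i hij
    have hσiL : σ i ≠ Fin.last (m+1) := by
      intro he; rw [← hL] at he
      have := σ.injective he
      rw [this] at hij
      exact absurd (hij.trans_le (Fin.le_last _)) (lt_irrefl _)
    refine ⟨0, Fin.last (m+1), Fin.pos_of_ne_zero hi0, ?_, ?_, ?_⟩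
    · exact lt_of_le_of_ne (Fin.le_last j) hjL
    · rw [h0]; exact Fin.pos_of_ne_zero hσj0
    · rw [hL]; exact lt_of_le_of_ne (Fin.le_last _) hσiL

/-- Conjugation by `finRotate` computed explicitly. -/
lemma conj_apply (σ : Equiv.Perm (Fin (m+2))) (x : Fin (m+2)) :
    ((finRotate (m+2))⁻¹ * σ * finRotate (m+2)) x = σ (x + 1) - 1 := by
  have hinv : ∀ y : Fin (m+2), (finRotate (m+2))⁻¹ y = y - 1 := by
    intro y
    have : finRotate (m+2) (y - 1) = y := by
      rw [finRotate_succ_apply]; abel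
    rw [show ((finRotate (m+2))⁻¹ : Equiv.Perm (Fin (m+2))) y
        = (finRotate (m+2)).symm y from rfl]
    rw [Equiv.symm_apply_eq]
    exact this.symm
  simp only [Equiv.Perm.mul_apply, finRotate_succ_apply, hinv]

/-- Descent count is preserved by the conjugation, on the relevant class. -/
lemma des_conj (σ : Equiv.Perm (Fin (m+2))) (h0 : σ 0 = 0) (h1 : σ 1 = 1) :
    des ((finRotate (m+2))⁻¹ * σ * finRotate (m+2)) = des σ := by
  set τ := (finRotate (m+2))⁻¹ * σ * finRotate (m+2) with hτ
  have htau : ∀ x, τ x = σ (x + 1) - 1 := conj_apply σ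
  have hσne : ∀ x : Fin (m+2), x ≠ 0 → σ x ≠ 0 := by
    intro x hx he
    rw [← h0] at he
    exact hx (σ.injective he)
  unfold des
  symm
  apply Finset.card_nbij' (fun i : Fin (m+2) => i - 1) (fun i : Fin (m+2) => i + 1)
  · -- forward: descent of σ at i gives descent of τ at i - 1
    intro i hi
    simp only [Finset.mem_coe, Finset.mem_filter, Finset.mem_univ, true_and] at hi ⊢
    obtain ⟨h, hlt⟩ := hi
    -- i.val ≥ 2
    have hival : 2 ≤ (i : ℕ) := by
      by_contra hc
      push_neg at hc
      have hc' : (i : ℕ) = 0 ∨ (i : ℕ) = 1 := by omega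
      have hi01 : i = 0 ∨ i = 1 := by
        rcases hc' with h' | h'
        · exact Or.inl (Fin.ext (by simpa using h'))
        · exact Or.inr (Fin.ext (by simpa using h'))
      rcases hi01 with rfl | rfl
      · rw [h0] at hlt
        exact Fin.not_lt_zero _ hlt
      · rw [h1] at hlt
        have h2 : σ ⟨((1 : Fin (m+2)):ℕ)+1, h⟩ = 0 := by
          apply Fin.ext
          have := Fin.lt_def.mp hlt
          simp only [Fin.val_one] at this
          simpa using Nat.lt_one_iff.mp this
        have h3 : (⟨((1 : Fin (m+2)):ℕ)+1, h⟩ : Fin (m+2)) = 0 := by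
          rw [← h0] at h2; exact σ.injective h2
        have h4 := Fin.ext_iff.mp h3
        simp [Fin.val_one] at h4
    have hine : i ≠ 0 := by
      intro he; rw [he] at hival; simp at hival
    have hisub : ((i - 1 : Fin (m+2)) : ℕ) = (i : ℕ) - 1 := by
      rw [Fin.coe_sub_one, if_neg hine]
    have hlt2 : ((i - 1 : Fin (m+2)) : ℕ) + 1 < m + 2 := by
      rw [hisub]; omega
    refine ⟨hlt2, ?_⟩
    have hadd : (⟨((i - 1 : Fin (m+2)) : ℕ) + 1, hlt2⟩ : Fin (m+2)) = i := by
      apply Fin.ext; simp [hisub]; omega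
    rw [hadd, htau, htau]
    have hsucc : (i : Fin (m+2)) + 1 = ⟨(i:ℕ)+1, h⟩ := by
      apply Fin.ext
      rw [Fin.val_add_one_of_lt]
      rw [Fin.lt_def]
      simp only [Fin.val_last]
      omega
    have hsucc2 : (i - 1 : Fin (m+2)) + 1 = i := by exact sub_add_cancel i 1
    rw [hsucc, hsucc2]
    rw [fin_sub_one_lt_sub_one]
    · exact hlt
    · apply hσne
      intro he
      have := Fin.ext_iff.mp he
      simp at this
    · exact hσne i hine
  · -- backward: descent of τ at j gives descent of σ at j + 1
    intro j hj
    simp only [Finset.mem_coe, Finset.mem_filter, Finset.mem_univ, true_and] at hj ⊢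
    obtain ⟨h, hlt⟩ := hj
    -- τ fixes last, so j.val + 1 ≤ m
    have hτlast : τ (Fin.last (m+1)) = Fin.last (m+1) := by
      rw [htau, fin_last_add_one, h0, fin_zero_sub_one]
    have hjval : (j : ℕ) + 1 < m + 1 := by
      rcases Nat.lt_or_ge ((j:ℕ) + 1) (m+1) with hc | hc
      · exact hc
      · exfalso
        have : (⟨(j:ℕ)+1, h⟩ : Fin (m+2)) = Fin.last (m+1) := by
          apply Fin.ext; simp; omega
        rw [this, hτlast] at hlt
        exact absurd (hlt.trans_le (Fin.le_last _)) (lt_irrefl _)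
    have hjaddval : ((j + 1 : Fin (m+2)) : ℕ) = (j : ℕ) + 1 := by
      rw [Fin.val_add_one_of_lt]
      rw [Fin.lt_def]; simp only [Fin.val_last]; omega
    have hlt2 : ((j + 1 : Fin (m+2)) : ℕ) + 1 < m + 2 := by
      rw [hjaddval]; omega
    refine ⟨hlt2, ?_⟩
    have hlast2 : (j + 1 : Fin (m+2)) < Fin.last (m+1) := by
      rw [Fin.lt_def, hjaddval]; simp only [Fin.val_last]; omega
    have he1 : (⟨((j + 1 : Fin (m+2)) : ℕ) + 1, hlt2⟩ : Fin (m+2)) = (j + 1) + 1 := by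
      apply Fin.ext
      rw [show ((j + 1 + 1 : Fin (m+2)) : ℕ) = ((j + 1 : Fin (m+2)) : ℕ) + 1 from
        Fin.val_add_one_of_lt hlast2]
    rw [he1]
    have he2 : (⟨(j:ℕ)+1, h⟩ : Fin (m+2)) = j + 1 := by
      apply Fin.ext; rw [hjaddval]
    rw [he2, htau, htau] at hlt
    have hne1 : σ (j + 1 + 1) ≠ 0 := by
      apply hσne
      intro he
      have := Fin.ext_iff.mp he
      rw [Fin.val_add_one_of_lt (by rw [Fin.lt_def]; simp only [Fin.val_last]; omega : (j+1 : Fin (m+2)) < Fin.last (m+1))] at this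
      rw [hjaddval] at this
      simp at this
    have hne2 : σ (j + 1) ≠ 0 := by
      apply hσne
      intro he
      have := Fin.ext_iff.mp he
      rw [hjaddval] at this
      simp at this
    exact (fin_sub_one_lt_sub_one hne1 hne2).mp hlt
  · intro i _; exact sub_add_cancel i 1
  · intro j _; exact add_sub_cancel_right j 1

end Aux

/-- The barred patterns `bar1 bar2 4 3` and `bar1 3 2 bar4` are des-Wilf equivalent. -/
theorem desWilf_bar1243_bar1324 :
    ∀ n : ℕ,
      ∑ σ ∈ Finset.univ.filter (fun σ : Equiv.Perm (Fin n) => avoidsBar1243 σ),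
          (X : Polynomial ℤ) ^ des σ =
        ∑ σ ∈ Finset.univ.filter (fun σ : Equiv.Perm (Fin n) => avoidsBar1324 σ),
          (X : Polynomial ℤ) ^ des σ := by
  intro n
  match n with
  | 0 =>
    have h1 : ∀ σ : Equiv.Perm (Fin 0), avoidsBar1243 σ := fun σ i => i.elim0
    have h2 : ∀ σ : Equiv.Perm (Fin 0), avoidsBar1324 σ := fun σ i => i.elim0
    rw [Finset.filter_true_of_mem (fun σ _ => h1 σ),
        Finset.filter_true_of_mem (fun σ _ => h2 σ)]
  | 1 =>
    have h1 : ∀ σ : Equiv.Perm (Fin 1), avoidsBar1243 σ := by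
      intro σ i j hij
      exact absurd hij (by rw [Fin.lt_def]; omega)
    have h2 : ∀ σ : Equiv.Perm (Fin 1), avoidsBar1324 σ := by
      intro σ i j hij
      exact absurd hij (by rw [Fin.lt_def]; omega)
    rw [Finset.filter_true_of_mem (fun σ _ => h1 σ),
        Finset.filter_true_of_mem (fun σ _ => h2 σ)]
  | (m + 2) =>
    apply Finset.sum_nbij'
      (i := fun σ => (finRotate (m+2))⁻¹ * σ * finRotate (m+2))
      (j := fun τ => finRotate (m+2) * τ * (finRotate (m+2))⁻¹)
    · intro σ hσ
      simp only [Finset.mem_filter, Finset.mem_univ, true_and] at hσ ⊢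
      rw [bar1243_iff] at hσ
      rw [bar1324_iff]
      obtain ⟨h0, h1⟩ := hσ
      constructor
      · rw [conj_apply, zero_add, h1]; abel
      · rw [conj_apply, fin_last_add_one, h0, fin_zero_sub_one]
    · intro τ hτ
      simp only [Finset.mem_filter, Finset.mem_univ, true_and] at hτ ⊢
      rw [bar1324_iff] at hτ
      rw [bar1243_iff]
      obtain ⟨h0, hL⟩ := hτ
      have key : ∀ x, (finRotate (m+2) * τ * (finRotate (m+2))⁻¹) x = τ (x - 1) + 1 := by
        intro x
        have hinv : ((finRotate (m+2))⁻¹ : Equiv.Perm (Fin (m+2))) x = x - 1 := by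
          rw [show ((finRotate (m+2))⁻¹ : Equiv.Perm (Fin (m+2))) x
              = (finRotate (m+2)).symm x from rfl, Equiv.symm_apply_eq,
              finRotate_succ_apply]
          abel
        simp only [Equiv.Perm.mul_apply, hinv, finRotate_succ_apply]
      constructor
      · rw [key, fin_zero_sub_one, hL, fin_last_add_one]
      · rw [key, show (1 : Fin (m+2)) - 1 = 0 by abel, h0, zero_add]
    · intro σ _; group
    · intro τ _; group
    · intro σ hσ
      simp only [Finset.mem_filter, Finset.mem_univ, true_and] at hσ
      rw [bar1243_iff] at hσ
      rw [des_conj σ hσ.1 hσ.2]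
end

section
/- For each n and k, the map that sends a permutation σ ∈ S_n avoiding {321, mesh(231,{(1,0)})} to the path whose i-th step is up if the letter at position determined by value i is a descent top, down if it is a descent bottom, and horizontal otherwise (steps indexed by values 1,...,n) is injective into the set of lattice paths of length n. -/
/-- The value `v` is a descent top of `σ`. -/
def IsDescTop {n : ℕ} (σ : Equiv.Perm (Fin n)) (v : Fin n) : Prop :=
  ∃ i : Fin n, ∃ h : (i : ℕ) + 1 < n, σ ⟨(i : ℕ) + 1, h⟩ < σ i ∧ σ i = v

/-- The value `v` is a descent bottom of `σ`. -/
def IsDescBot {n : ℕ} (σ : Equiv.Perm (Fin n)) (v : Fin n) : Prop :=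
  ∃ i : Fin n, ∃ h : (i : ℕ) + 1 < n, σ ⟨(i : ℕ) + 1, h⟩ < σ i ∧ σ ⟨(i : ℕ) + 1, h⟩ = v

-- The lattice path associated to `σ`: its `v`-th step (steps indexed by the values
-- `1, …, n`) is up (`1`) if `v` is a descent top of `σ`, down (`-1`) if `v` is a descent
-- bottom, and horizontal (`0`) otherwise.
open Classical in
noncomputable def pathOf {n : ℕ} (σ : Equiv.Perm (Fin n)) : Fin n → ℤ :=
  fun v => if IsDescTop σ v then 1 else if IsDescBot σ v then -1 else 0

/-- In a 321-avoiding permutation, no value is both a descent top and a descent bottom. -/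
lemma not_top_and_bot {n : ℕ} (σ : Equiv.Perm (Fin n)) (h321 : avoids321 σ) (v : Fin n) :
    ¬ (IsDescTop σ v ∧ IsDescBot σ v) := by
  rintro ⟨⟨j, hj, hjd, hjv⟩, ⟨d, hd, hdd, hdv⟩⟩
  have hje : j = ⟨(d : ℕ) + 1, hd⟩ := σ.injective (by rw [hjv, hdv])
  subst hje
  apply h321
  refine ⟨d, ⟨(d : ℕ) + 1, hd⟩, ⟨(d : ℕ) + 1 + 1, hj⟩, ?_, ?_, hdd, ?_⟩
  · simp [Fin.lt_def]
  · simp [Fin.lt_def]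
  · exact hjd

/-- No descent top smaller than `σ p` occurs strictly after position `p`. -/
lemma top_min {n : ℕ} (σ : Equiv.Perm (Fin n)) (h321 : avoids321 σ) {p t : Fin n}
    (ht : IsDescTop σ t) (hpos : (p : ℕ) < (σ.symm t : ℕ)) (hlt : t < σ p) : False := by
  obtain ⟨r, hr, hrd, hrv⟩ := ht
  have hre : σ.symm t = r := by rw [← hrv, Equiv.symm_apply_apply]
  apply h321
  refine ⟨p, r, ⟨(r : ℕ) + 1, hr⟩, ?_, ?_, ?_, hrd⟩
  · rw [hre] at hpos; exact hpos
  · simp [Fin.lt_def]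
  · rw [hrv]; exact hlt

/-- The key dichotomy: at position `p`, either `σ p` is the minimum `m` of the values
occurring at positions `≥ p`, or `σ p` is a descent top, `m` sits at position `p+1`,
and `σ p` is the smallest descent top occurring at a position `≥ p`. -/
lemma dichotomy {n : ℕ} (σ : Equiv.Perm (Fin n)) (h321 : avoids321 σ)
    (hmesh : avoidsMesh231 σ) (p m : Fin n)
    (hmS : (p : ℕ) ≤ (σ.symm m : ℕ))
    (hmin : ∀ v : Fin n, (p : ℕ) ≤ (σ.symm v : ℕ) → m ≤ v) :
    σ p = m ∨ (IsDescTop σ (σ p) ∧ (σ.symm m : ℕ) = (p : ℕ) + 1 ∧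
      ∀ t : Fin n, (p : ℕ) ≤ (σ.symm t : ℕ) → IsDescTop σ t → σ p ≤ t) := by
  by_cases heq : σ p = m
  · exact Or.inl heq
  right
  have hq0 : (p : ℕ) < (σ.symm m : ℕ) := by
    rcases lt_or_eq_of_le hmS with h | h
    · exact h
    · exfalso; apply heq
      have : σ.symm m = p := Fin.ext h.symm
      rw [← this, Equiv.apply_symm_apply]
  have hmp : m < σ p := by
    have h1 : m ≤ σ p := hmin (σ p) (by rw [Equiv.symm_apply_apply])
    rcases lt_or_eq_of_le h1 with h | h
    · exact h
    · exact absurd h.symm heq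
  have hq1 : (σ.symm m : ℕ) = (p : ℕ) + 1 := by
    by_contra hne
    have hgt : (p : ℕ) + 1 < (σ.symm m : ℕ) := by omega
    set q0 : Fin n := σ.symm m with hq0def
    have hq0n : (q0 : ℕ) < n := q0.isLt
    set j : Fin n := ⟨(q0 : ℕ) - 1, by omega⟩ with hjdef
    have hjge : (p : ℕ) ≤ (σ.symm (σ j) : ℕ) := by
      rw [Equiv.symm_apply_apply]; simp [hjdef]; omega
    have hmj : m < σ j := by
      have h1 : m ≤ σ j := hmin (σ j) hjge
      rcases lt_or_eq_of_le h1 with h | h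
      · exact h
      · exfalso
        have : σ.symm m = j := by rw [h, Equiv.symm_apply_apply]
        rw [this] at hq0def
        have : (j : ℕ) = (q0 : ℕ) := by rw [hq0def]
        simp [hjdef] at this
        omega
    have hσq0 : σ q0 = m := Equiv.apply_symm_apply σ m
    have hpj : p < j := by rw [Fin.lt_def]; simp [hjdef]; omega
    have hjq0 : j < q0 := by rw [Fin.lt_def]; simp [hjdef]; omega
    rcases lt_trichotomy (σ p) (σ j) with h | h | h
    · obtain ⟨l, hpl, hlj, hlm⟩ := hmesh p j q0 hpj hjq0 (by rw [hσq0]; exact hmp) h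
      have : m ≤ σ l := hmin (σ l) (by rw [Equiv.symm_apply_apply]; exact le_of_lt hpl)
      rw [hσq0] at hlm
      exact absurd hlm (not_lt_of_ge this)
    · exact absurd (σ.injective h) (ne_of_lt hpj)
    · exact h321 ⟨p, j, q0, hpj, hjq0, h, by rw [hσq0]; exact hmj⟩
  have hpn : (p : ℕ) + 1 < n := by rw [← hq1]; exact (σ.symm m).isLt
  have hsucc : (⟨(p : ℕ) + 1, hpn⟩ : Fin n) = σ.symm m := Fin.ext (by simp [hq1])
  have hdesc : σ ⟨(p : ℕ) + 1, hpn⟩ < σ p := by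
    rw [hsucc, Equiv.apply_symm_apply]; exact hmp
  refine ⟨⟨p, hpn, hdesc, rfl⟩, hq1, ?_⟩
  intro t hts htop
  by_contra hlt
  push_neg at hlt
  have hne : (p : ℕ) ≠ (σ.symm t : ℕ) := by
    intro h
    have : σ.symm t = p := Fin.ext h.symm
    rw [← this, Equiv.apply_symm_apply] at hlt
    exact lt_irrefl _ hlt
  exact top_min σ h321 htop (by omega) hlt

/-- Contradiction in the asymmetric case: `σ p = m` but `τ p ≠ m`. -/
lemma case_contr {n : ℕ} (σ τ : Equiv.Perm (Fin n)) (hσ321 : avoids321 σ)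
    (hτ321 : avoids321 τ)
    (htop : ∀ v, IsDescTop σ v ↔ IsDescTop τ v)
    (hbot : ∀ v, IsDescBot σ v ↔ IsDescBot τ v)
    (p m : Fin n)
    (IH : ∀ q : Fin n, (q : ℕ) < (p : ℕ) → σ q = τ q)
    (hmin : ∀ v : Fin n, (p : ℕ) ≤ (τ.symm v : ℕ) → m ≤ v)
    (hσp : σ p = m)
    (hτtop : IsDescTop τ (τ p)) (hτq : (τ.symm m : ℕ) = (p : ℕ) + 1) : False := by
  -- m is a descent bottom of τ (descent at position p in τ)
  have hpn : (p : ℕ) + 1 < n := by rw [← hτq]; exact (τ.symm m).isLt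
  have hsucc : (⟨(p : ℕ) + 1, hpn⟩ : Fin n) = τ.symm m := Fin.ext (by simp [hτq])
  have hτsm : τ ⟨(p : ℕ) + 1, hpn⟩ = m := by rw [hsucc, Equiv.apply_symm_apply]
  have hmp : m < τ p := by
    have h1 : m ≤ τ p := hmin (τ p) (by rw [Equiv.symm_apply_apply])
    rcases lt_or_eq_of_le h1 with h | h
    · exact h
    · exfalso
      have : τ.symm m = p := by rw [h, Equiv.symm_apply_apply]
      rw [this] at hτq; omega
  have hbotm : IsDescBot τ m := ⟨p, hpn, by rw [hτsm]; exact hmp, hτsm⟩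
  -- hence m is a descent bottom of σ; since σ p = m, the descent top is σ at p-1
  obtain ⟨d, hd, hdd, hdv⟩ := (hbot m).mpr hbotm
  have hdp : (d : ℕ) + 1 = (p : ℕ) := by
    have : σ.symm m = ⟨(d : ℕ) + 1, hd⟩ := by rw [← hdv, Equiv.symm_apply_apply]
    have h2 : σ.symm m = p := by rw [← hσp, Equiv.symm_apply_apply]
    rw [h2] at this
    exact (congrArg Fin.val this).symm
  -- t0 := σ d is a descent top of σ, hence of τ; but τ d = σ d, so descent at d in τ
  have hσtop : IsDescTop σ (σ d) := ⟨d, hd, hdd, rfl⟩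
  have hτd : τ d = σ d := (IH d (by omega)).symm
  obtain ⟨j, hj, hjd, hjv⟩ := (htop (σ d)).mp hσtop
  have hje : j = d := τ.injective (by rw [hjv, hτd])
  subst hje
  -- so τ at position d+1 = p is less than τ d: τ p is a descent bottom of τ
  have hfin : (⟨(j : ℕ) + 1, hj⟩ : Fin n) = p := Fin.ext hdp
  rw [hfin] at hjd
  have hbotτp : IsDescBot τ (τ p) := ⟨j, hj, by rw [hfin]; exact hjd, by rw [hfin]⟩
  exact not_top_and_bot τ hτ321 (τ p) ⟨hτtop, hbotτp⟩

/-- The map `σ ↦ pathOf σ` is injective on permutations avoiding `321` and the mesh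
pattern `(231,{(1,0)})`. -/
theorem pathOf_injOn (n : ℕ) :
    Set.InjOn (pathOf (n := n))
      {σ : Equiv.Perm (Fin n) | avoids321 σ ∧ avoidsMesh231 σ} := by
  intro σ hσ τ hτ hpath
  obtain ⟨hσ321, hσmesh⟩ := hσ
  obtain ⟨hτ321, hτmesh⟩ := hτ
  have hiff : ∀ v, (IsDescTop σ v ↔ IsDescTop τ v) ∧ (IsDescBot σ v ↔ IsDescBot τ v) := by
    intro v
    have e : pathOf σ v = pathOf τ v := congrFun hpath v
    have dσ := not_top_and_bot σ hσ321 v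
    have dτ := not_top_and_bot τ hτ321 v
    simp only [pathOf] at e
    split_ifs at e
    all_goals (try norm_num at e)
    all_goals tauto
  have htop : ∀ v, IsDescTop σ v ↔ IsDescTop τ v := fun v => (hiff v).1
  have hbot : ∀ v, IsDescBot σ v ↔ IsDescBot τ v := fun v => (hiff v).2
  suffices h : ∀ k : ℕ, ∀ p : Fin n, (p : ℕ) = k → σ p = τ p by
    exact Equiv.ext fun p => h (p : ℕ) p rfl
  intro k
  induction k using Nat.strong_induction_on with
  | _ k IHk =>
    intro p hp
    have IH : ∀ q : Fin n, (q : ℕ) < (p : ℕ) → σ q = τ q := by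
      intro q hq
      exact IHk (q : ℕ) (by omega) q rfl
    -- the suffix value sets agree
    have hS : ∀ v : Fin n, (p : ℕ) ≤ (σ.symm v : ℕ) ↔ (p : ℕ) ≤ (τ.symm v : ℕ) := by
      have h1 : ∀ v : Fin n, (σ.symm v : ℕ) < (p : ℕ) → (τ.symm v : ℕ) < (p : ℕ) := by
        intro v h
        have h2 : σ (σ.symm v) = τ (σ.symm v) := IH (σ.symm v) h
        have h3 : τ.symm v = σ.symm v := by
          rw [Equiv.symm_apply_eq, ← h2, Equiv.apply_symm_apply]
        rw [h3]; exact h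
      have h2 : ∀ v : Fin n, (τ.symm v : ℕ) < (p : ℕ) → (σ.symm v : ℕ) < (p : ℕ) := by
        intro v h
        have h2 : σ (τ.symm v) = τ (τ.symm v) := IH (τ.symm v) h
        have h3 : σ.symm v = τ.symm v := by
          rw [Equiv.symm_apply_eq, h2, Equiv.apply_symm_apply]
        rw [h3]; exact h
      intro v
      constructor <;> intro h <;> by_contra hc <;> push_neg at hc
      · exact absurd (h2 v hc) (by omega)
      · exact absurd (h1 v hc) (by omega)
    -- the minimum of the suffix values
    set S : Finset (Fin n) := Finset.univ.filter (fun v => (p : ℕ) ≤ (σ.symm v : ℕ)) with hSdef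
    have hSne : S.Nonempty := ⟨σ p, by simp [hSdef, Equiv.symm_apply_apply]⟩
    set m : Fin n := S.min' hSne with hmdef
    have hmmem : m ∈ S := S.min'_mem hSne
    have hmS : (p : ℕ) ≤ (σ.symm m : ℕ) := by
      have := hmmem; simp [hSdef] at this; exact this
    have hmin : ∀ v : Fin n, (p : ℕ) ≤ (σ.symm v : ℕ) → m ≤ v := by
      intro v hv
      exact S.min'_le v (by simp [hSdef]; exact hv)
    have hmSτ : (p : ℕ) ≤ (τ.symm m : ℕ) := (hS m).mp hmS
    have hminτ : ∀ v : Fin n, (p : ℕ) ≤ (τ.symm v : ℕ) → m ≤ v := by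
      intro v hv; exact hmin v ((hS v).mpr hv)
    rcases dichotomy σ hσ321 hσmesh p m hmS hmin with hσp | ⟨hσtop, hσq, hσmin⟩ <;>
      rcases dichotomy τ hτ321 hτmesh p m hmSτ hminτ with hτp | ⟨hτtop, hτq, hτmin⟩
    · rw [hσp, hτp]
    · exact absurd (case_contr σ τ hσ321 hτ321 htop hbot p m IH hminτ hσp hτtop hτq) id
    · exact absurd (case_contr τ σ hτ321 hσ321 (fun v => (htop v).symm)
        (fun v => (hbot v).symm) p m (fun q hq => (IH q hq).symm) hmin hτp hσtop hσq) id
    · -- both are the minimal descent top in the suffix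
      have h1 : σ p ≤ τ p := by
        apply hσmin (τ p)
        · exact (hS (τ p)).mpr (by rw [Equiv.symm_apply_apply])
        · exact (htop (τ p)).mpr hτtop
      have h2 : τ p ≤ σ p := by
        apply hτmin (σ p)
        · exact (hS (σ p)).mp (by rw [Equiv.symm_apply_apply])
        · exact (htop (σ p)).mp hσtop
      exact le_antisymm h1 h2
end
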